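/- arXiv:2308.14226 — 8 statements merged into one kernel-verified Lean document; each statement's English description precedes it below -/
import Mathlib

section
/- Let F be a free group with basis {g_j | j ∈ J}, N a normal subgroup of F, and D_k a Fox derivative of ℤ[F]. Then for every f ∈ F and n ∈ N, D_k(f⁻¹ n f) ≡ D_k(n)·f modulo the right ideal ℤ[F]·(N−1), where ℤ[F]·(N−1) denotes the right ideal of ℤ[F] generated by elements n−1 with n ∈ N. -/
open scoped Classical

/-- The augmentation map `ℤ[F] → ℤ` induced by the trivial homomorphism `F → 1`. -/
noncomputable def aug (J : Type) : MonoidAlgebra ℤ (FreeGroup J) →ₐ[ℤ] ℤ :=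
  MonoidAlgebra.lift ℤ ℤ (FreeGroup J) 1

/-- `D` is the Fox derivative of `ℤ[F]` with respect to the generator `g_k`:
it is ℤ-linear, satisfies `D(uv) = D(u)v + ε(u)D(v)`, and sends `g_j` to `δ_{kj}`. -/
def IsFoxDerivative {J : Type} (k : J)
    (D : MonoidAlgebra ℤ (FreeGroup J) →ₗ[ℤ] MonoidAlgebra ℤ (FreeGroup J)) : Prop :=
  (∀ u v : MonoidAlgebra ℤ (FreeGroup J), D (u * v) = D u * v + (aug J u) • D v) ∧
  (∀ j : J, D (MonoidAlgebra.of ℤ (FreeGroup J) (FreeGroup.of j)) = if k = j then 1 else 0)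

/-- The ideal `ℤ[F]·(N−1)` of `ℤ[F]` generated by the elements `n − 1`, `n ∈ N`. -/
noncomputable def NIdeal {J : Type} (N : Subgroup (FreeGroup J)) :
    Submodule ℤ (MonoidAlgebra ℤ (FreeGroup J)) :=
  Submodule.span ℤ {a | ∃ u : MonoidAlgebra ℤ (FreeGroup J), ∃ n ∈ N,
    a = u * (MonoidAlgebra.of ℤ (FreeGroup J) n - 1)}

/-- The ideal `d·ℤ[F]` of multiples of the integer `d`. -/
noncomputable def dIdeal {J : Type} (d : ℤ) : Submodule ℤ (MonoidAlgebra ℤ (FreeGroup J)) :=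
  Submodule.span ℤ {a | ∃ u : MonoidAlgebra ℤ (FreeGroup J), a = d • u}

/-- For `f ∈ F` and `n ∈ N` (N normal), `D_k(f⁻¹nf) ≡ D_k(n)·f mod ℤ[F]·(N−1)`. -/
theorem fox_derivative_conj {J : Type} (k : J)
    (D : MonoidAlgebra ℤ (FreeGroup J) →ₗ[ℤ] MonoidAlgebra ℤ (FreeGroup J))
    (hD : IsFoxDerivative k D) (N : Subgroup (FreeGroup J)) (hN : N.Normal)
    (f : FreeGroup J) (n : FreeGroup J) (hn : n ∈ N) :
    D (MonoidAlgebra.of ℤ (FreeGroup J) (f⁻¹ * n * f)) -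
      D (MonoidAlgebra.of ℤ (FreeGroup J) n) * MonoidAlgebra.of ℤ (FreeGroup J) f ∈
      NIdeal N := by

  classical
  obtain ⟨hmul, -⟩ := hD
  set o : FreeGroup J →* MonoidAlgebra ℤ (FreeGroup J) := MonoidAlgebra.of ℤ (FreeGroup J)
  have haug : ∀ g : FreeGroup J, aug J (o g) = 1 := by
    intro g
    simp [aug, o, MonoidAlgebra.lift_of]
  have hD1 : D 1 = 0 := by
    have h := hmul 1 1
    simp only [mul_one, map_one, one_smul] at h
    have h2 : D 1 + D 1 = D 1 + 0 := by rw [add_zero]; exact h.symm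
    exact add_left_cancel h2
  have hinv : D (o f⁻¹) = -(D (o f) * o f⁻¹) := by
    have h1 : o f⁻¹ * o f = 1 := by rw [← map_mul, inv_mul_cancel, map_one]
    have h := hmul (o f⁻¹) (o f)
    rw [h1, hD1, haug, one_smul] at h
    have h2 : D (o f⁻¹) * o f = -(D (o f)) := by linear_combination (norm := noncomm_ring) -h
    have h3 : D (o f⁻¹) * o f * o f⁻¹ = -(D (o f)) * o f⁻¹ := by rw [h2]
    rw [mul_assoc, ← map_mul, mul_inv_cancel, map_one, mul_one] at h3
    rw [h3, neg_mul]
  have key : D (o (f⁻¹ * n * f)) - D (o n) * o f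
      = -(D (o f)) * (o (f⁻¹ * n * f) - 1) := by
    have e1 : o (f⁻¹ * n * f) = o f⁻¹ * o n * o f := by rw [map_mul, map_mul]
    have haug2 : aug J (o f⁻¹ * o n) = 1 := by rw [← map_mul]; exact haug _
    rw [e1, hmul, hmul, haug, haug2, one_smul, one_smul, hinv]
    noncomm_ring
  rw [key]
  exact Submodule.subset_span ⟨-(D (o f)), f⁻¹ * n * f,
    by simpa using hN.conj_mem n hn f⁻¹, rfl⟩
end

section
/- Let F be a free group with basis {g_j | j ∈ J}, K ⊆ J, F_K the subgroup generated by {g_j | j ∈ K}, N a normal subgroup of F, d an integer with d ≠ 1, and let 𝔑 = ℤ[F]·(N−1) + d·ℤ[F]. If v ∈ F_K · ((F_K ∩ N)^F) · [N,N] · N^d, then D_k(v) ≡ 0 mod 𝔑 for every k ∈ J \ K, where N^d denotes the subgroup generated by d-th powers of elements of N and (F_K ∩ N)^F is the normal closure of F_K ∩ N in F. -/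
open scoped Classical

open scoped Pointwise

/-- The subgroup `N^d` generated by `d`-th powers of elements of `N`. -/
def powSubgroup {J : Type} (N : Subgroup (FreeGroup J)) (d : ℤ) : Subgroup (FreeGroup J) :=
  Subgroup.closure {x | ∃ n ∈ N, x = n ^ d}

/-- The set `F_K · ((F_K ∩ N)^F) · [N,N] · N^d`. -/
def bigSet {J : Type} (K : Set J) (N : Subgroup (FreeGroup J)) (d : ℤ) :
    Set (FreeGroup J) :=
  ((Subgroup.closure (FreeGroup.of '' K) : Subgroup (FreeGroup J)) : Set (FreeGroup J)) *
    ((Subgroup.normalClosure ((Subgroup.closure (FreeGroup.of '' K) ⊓ N :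
        Subgroup (FreeGroup J)) : Set (FreeGroup J))) : Set (FreeGroup J)) *
    ((⁅N, N⁆ : Subgroup (FreeGroup J)) : Set (FreeGroup J)) *
    ((powSubgroup N d : Subgroup (FreeGroup J)) : Set (FreeGroup J))

section Aux

variable {J : Type}

local notation "ofF" => MonoidAlgebra.of ℤ (FreeGroup J)

lemma aug_of (g : FreeGroup J) : aug J (ofF g) = 1 := by
  simp [aug]

variable {k : J} {D : MonoidAlgebra ℤ (FreeGroup J) →ₗ[ℤ] MonoidAlgebra ℤ (FreeGroup J)}

lemma fox_one (hD : IsFoxDerivative k D) : D 1 = 0 := by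
  have h := hD.1 1 1
  simp only [mul_one, map_one, one_smul] at h
  exact left_eq_add.mp h

lemma fox_mul (hD : IsFoxDerivative k D) (g h : FreeGroup J) :
    D (ofF (g * h)) = D (ofF g) * ofF h + D (ofF h) := by
  rw [map_mul, hD.1, aug_of, one_smul]

lemma fox_inv (hD : IsFoxDerivative k D) (g : FreeGroup J) :
    D (ofF g⁻¹) = -(D (ofF g) * ofF g⁻¹) := by
  have h := fox_mul hD g g⁻¹
  rw [mul_inv_cancel, map_one, fox_one hD] at h
  exact (neg_eq_of_add_eq_zero_right h.symm).symm

lemma NIdeal_mem_gen {N : Subgroup (FreeGroup J)} (u : MonoidAlgebra ℤ (FreeGroup J))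
    {n : FreeGroup J} (hn : n ∈ N) : u * (ofF n - 1) ∈ NIdeal N :=
  Submodule.subset_span ⟨u, n, hn, rfl⟩

lemma NIdeal_mul_of {N : Subgroup (FreeGroup J)} (hN : N.Normal)
    {x : MonoidAlgebra ℤ (FreeGroup J)} (hx : x ∈ NIdeal N) (w : FreeGroup J) :
    x * ofF w ∈ NIdeal N := by
  refine Submodule.span_induction ?_ ?_ ?_ ?_ hx
  · rintro a ⟨u, n, hn, rfl⟩
    have hcomm : ofF w * ofF (w⁻¹ * n * w) = ofF n * ofF w := by
      rw [← map_mul, ← map_mul]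
      congr 1
      group
    have key : u * (ofF n - 1) * ofF w = (u * ofF w) * (ofF (w⁻¹ * n * w) - 1) := by
      rw [mul_sub, mul_sub, mul_one, mul_one, mul_assoc, hcomm]
      noncomm_ring
    rw [key]
    exact NIdeal_mem_gen _ (by simpa using hN.conj_mem n hn w⁻¹)
  · simp
  · intro a b _ _ ha hb
    rw [add_mul]; exact Submodule.add_mem _ ha hb
  · intro z a _ ha
    rw [smul_mul_assoc]; exact Submodule.smul_mem _ _ ha

lemma dIdeal_mem_gen (d : ℤ) (u : MonoidAlgebra ℤ (FreeGroup J)) : d • u ∈ dIdeal d :=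
  Submodule.subset_span ⟨u, rfl⟩

lemma dIdeal_mul_of {d : ℤ} {x : MonoidAlgebra ℤ (FreeGroup J)} (hx : x ∈ dIdeal d)
    (w : FreeGroup J) : x * ofF w ∈ dIdeal d := by
  refine Submodule.span_induction ?_ ?_ ?_ ?_ hx
  · rintro a ⟨u, rfl⟩
    rw [smul_mul_assoc]
    exact dIdeal_mem_gen d _
  · simp
  · intro a b _ _ ha hb
    rw [add_mul]; exact Submodule.add_mem _ ha hb
  · intro z a _ ha
    rw [smul_mul_assoc]; exact Submodule.smul_mem _ _ ha

lemma big_mul_of {N : Subgroup (FreeGroup J)} (hN : N.Normal) {d : ℤ}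
    {x : MonoidAlgebra ℤ (FreeGroup J)} (hx : x ∈ NIdeal N ⊔ dIdeal d) (w : FreeGroup J) :
    x * ofF w ∈ NIdeal N ⊔ dIdeal d := by
  rw [Submodule.mem_sup] at hx ⊢
  obtain ⟨a, ha, b, hb, rfl⟩ := hx
  exact ⟨a * ofF w, NIdeal_mul_of hN ha w, b * ofF w, dIdeal_mul_of hb w, (add_mul a b _).symm⟩

lemma fox_zpow (hD : IsFoxDerivative k D) {N : Subgroup (FreeGroup J)} (hN : N.Normal)
    {n : FreeGroup J} (hn : n ∈ N) :
    ∀ m : ℤ, D (ofF (n ^ m)) - m • D (ofF n) ∈ NIdeal N := by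
  have hnat : ∀ m : ℕ, D (ofF (n ^ m)) - (m : ℤ) • D (ofF n) ∈ NIdeal N := by
    intro m
    induction m with
    | zero =>
      rw [pow_zero, map_one, fox_one hD]
      simp
    | succ m ih =>
      have hp : D (ofF (n ^ (m + 1))) = D (ofF (n ^ m)) * ofF n + D (ofF n) := by
        rw [pow_succ]; exact fox_mul hD _ _
      have key : D (ofF (n ^ (m + 1))) - ((m : ℕ) + 1 : ℤ) • D (ofF n)
          = (D (ofF (n ^ m)) - (m : ℤ) • D (ofF n)) * ofF n
            + (m : ℤ) • (D (ofF n) * (ofF n - 1)) := by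
        rw [hp]
        simp only [zsmul_eq_mul]
        push_cast
        noncomm_ring
      rw [Nat.cast_add, Nat.cast_one, key]
      exact Submodule.add_mem _ (NIdeal_mul_of hN ih n)
        (Submodule.smul_mem _ _ (NIdeal_mem_gen _ hn))
  intro m
  rcases m with m | m
  · simpa using hnat m
  · have hpos := hnat (m + 1)
    have hinv : D (ofF (n ^ (Int.negSucc m)))
        = -(D (ofF (n ^ (m + 1))) * ofF ((n ^ (m + 1))⁻¹)) := by
      rw [zpow_negSucc, fox_inv hD]
    have key : D (ofF (n ^ (Int.negSucc m))) - (Int.negSucc m) • D (ofF n)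
        = -((D (ofF (n ^ (m + 1))) - ((m : ℕ) + 1 : ℤ) • D (ofF n)) * ofF ((n ^ (m + 1))⁻¹))
          - ((m : ℕ) + 1 : ℤ) • (D (ofF n) * (ofF ((n ^ (m + 1))⁻¹) - 1)) := by
      rw [hinv, Int.negSucc_eq]
      simp only [zsmul_eq_mul]
      push_cast
      noncomm_ring
    rw [key]
    rw [Nat.cast_add, Nat.cast_one] at hpos
    refine Submodule.sub_mem _ (Submodule.neg_mem _ (NIdeal_mul_of hN hpos _))
      (Submodule.smul_mem _ _ (NIdeal_mem_gen _ ?_))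
    exact N.inv_mem (N.pow_mem hn _)

end Aux

/-- If `v ∈ F_K·((F_K ∩ N)^F)·[N,N]·N^d`, then `D_k(v) ≡ 0 mod 𝔑 = ℤ[F]·(N−1) + d·ℤ[F]`
for every `k ∈ J \ K`. -/
theorem fox_congruence_of_mem {J : Type} (K : Set J) (N : Subgroup (FreeGroup J))
    (hN : N.Normal) (d : ℤ) (hd : d ≠ 1)
    (D : J → (MonoidAlgebra ℤ (FreeGroup J) →ₗ[ℤ] MonoidAlgebra ℤ (FreeGroup J)))
    (hD : ∀ j, IsFoxDerivative j (D j)) (v : FreeGroup J) (hv : v ∈ bigSet K N d) :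
    ∀ k, k ∉ K → D k (MonoidAlgebra.of ℤ (FreeGroup J) v) ∈ NIdeal N ⊔ dIdeal d := by
  intro k hk
  have hDk := hD k
  set ofF := MonoidAlgebra.of ℤ (FreeGroup J) with hofF
  -- The subgroup of elements whose Fox derivative lies in the ideal
  let S : Subgroup (FreeGroup J) :=
    { carrier := {g | D k (ofF g) ∈ NIdeal N ⊔ dIdeal d}
      one_mem' := by
        show D k (ofF 1) ∈ NIdeal N ⊔ dIdeal d
        rw [map_one, fox_one hDk]
        exact Submodule.zero_mem _
      mul_mem' := by
        intro g h hg hh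
        show D k (ofF (g * h)) ∈ NIdeal N ⊔ dIdeal d
        rw [fox_mul hDk]
        exact Submodule.add_mem _ (big_mul_of hN hg h) hh
      inv_mem' := by
        intro g hg
        show D k (ofF g⁻¹) ∈ NIdeal N ⊔ dIdeal d
        rw [fox_inv hDk]
        exact Submodule.neg_mem _ (big_mul_of hN hg g⁻¹) }
  -- Step 1 : F_K ≤ S
  have hA : Subgroup.closure (FreeGroup.of '' K) ≤ S := by
    rw [Subgroup.closure_le]
    rintro x ⟨j, hj, rfl⟩
    show D k (ofF (FreeGroup.of j)) ∈ NIdeal N ⊔ dIdeal d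
    have hkj : k ≠ j := fun h => hk (by rw [h]; exact hj)
    rw [(hD k).2 j, if_neg hkj]
    exact Submodule.zero_mem _
  -- Step 2 : (F_K ∩ N)^F ≤ S
  have hB : Subgroup.normalClosure
      ((Subgroup.closure (FreeGroup.of '' K) ⊓ N : Subgroup (FreeGroup J)) :
        Set (FreeGroup J)) ≤ S := by
    rw [Subgroup.normalClosure, Subgroup.closure_le]
    intro x hx
    rw [Group.mem_conjugatesOfSet_iff] at hx
    obtain ⟨a, ha, hconj⟩ := hx
    obtain ⟨c, rfl⟩ := isConj_iff.1 hconj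
    have haK : a ∈ Subgroup.closure (FreeGroup.of '' K) := ha.1
    have haN : a ∈ N := ha.2
    have haS : D k (ofF a) ∈ NIdeal N ⊔ dIdeal d := hA haK
    show D k (ofF (c * a * c⁻¹)) ∈ NIdeal N ⊔ dIdeal d
    have key : D k (ofF (c * a * c⁻¹))
        = D k (ofF c) * (ofF a - 1) * ofF c⁻¹ + D k (ofF a) * ofF c⁻¹ := by
      rw [mul_assoc, fox_mul hDk, fox_mul hDk, fox_inv hDk, map_mul]
      noncomm_ring
    rw [key]
    exact Submodule.add_mem _
      (Submodule.mem_sup_left (NIdeal_mul_of hN (NIdeal_mem_gen _ haN) c⁻¹))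
      (big_mul_of hN haS c⁻¹)
  -- Step 3 : [N,N] ≤ S
  open scoped commutatorElement in
  have hC : ⁅N, N⁆ ≤ S := by
    rw [Subgroup.commutator_le]
    intro n hn m hm
    show D k (ofF ⁅n, m⁆) ∈ NIdeal N ⊔ dIdeal d
    have key : D k (ofF ⁅n, m⁆)
        = D k (ofF n) * (ofF m - 1) * ofF (n⁻¹ * m⁻¹)
          + D k (ofF m) * (ofF n⁻¹ - 1) * ofF m⁻¹ := by
      rw [commutatorElement_def,
        show n * m * n⁻¹ * m⁻¹ = n * (m * (n⁻¹ * m⁻¹)) by group,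
        fox_mul hDk, fox_mul hDk, fox_mul hDk, fox_inv hDk n, fox_inv hDk m]
      simp only [map_mul]
      noncomm_ring
    rw [key]
    exact Submodule.add_mem _
      (Submodule.mem_sup_left (NIdeal_mul_of hN (NIdeal_mem_gen _ hm) _))
      (Submodule.mem_sup_left (NIdeal_mul_of hN (NIdeal_mem_gen _ (N.inv_mem hn)) _))
  -- Step 4 : N^d ≤ S
  have hE : powSubgroup N d ≤ S := by
    rw [powSubgroup, Subgroup.closure_le]
    rintro x ⟨n, hn, rfl⟩
    show D k (ofF (n ^ d)) ∈ NIdeal N ⊔ dIdeal d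
    have h1 := fox_zpow hDk hN hn d
    have h2 := dIdeal_mem_gen d (D k (ofF n))
    have key : D k (ofF (n ^ d))
        = (D k (ofF (n ^ d)) - d • D k (ofF n)) + d • D k (ofF n) := by
      abel
    rw [key]
    exact Submodule.add_mem _ (Submodule.mem_sup_left h1) (Submodule.mem_sup_right h2)
  -- Assemble
  obtain ⟨x, hx, e, he, rfl⟩ := hv
  obtain ⟨y, hy, c, hc, rfl⟩ := hx
  obtain ⟨a, ha, b, hb, rfl⟩ := hy
  exact S.mul_mem (S.mul_mem (S.mul_mem (hA ha) (hB hb)) (hC hc)) (hE he)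
end

section
/- Let F be a free group with basis x_1, …, x_n, let D_1, …, D_n be the Fox derivatives of ℤ[F], let r ≠ 1 be an element of F, let R be the normal closure of r in F, and let H be the subgroup generated by x_1, …, x_{n−1}. If H ∩ R = 1, then D_n(r) ≢ 0 mod ℤ[F]·(R−1). -/
open scoped Classical

namespace MagnusAux

open MonoidAlgebra

/-! ### Reduced words and chains -/

/-- Non-cancellation of two adjacent letters. -/
def NC {α : Type} (p q : α × Bool) : Prop := ¬(p.1 = q.1 ∧ p.2 = !q.2)

theorem reduce_eq_self_of_chain' {α : Type} [DecidableEq α] :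
    ∀ {L : List (α × Bool)}, List.Chain' (NC) L → FreeGroup.reduce L = L
  | [], _ => rfl
  | [x], _ => rfl
  | x :: y :: L, h => by
    have h1 : List.Chain' NC (y :: L) := (List.isChain_cons_cons.1 h).2
    have h2 : NC x y := (List.isChain_cons_cons.1 h).1
    have ih := reduce_eq_self_of_chain' h1
    rw [FreeGroup.reduce.cons, ih]
    exact if_neg h2

theorem chain'_of_reduce_eq_self {α : Type} [DecidableEq α] :
    ∀ {L : List (α × Bool)}, FreeGroup.reduce L = L → List.Chain' NC L
  | [], _ => List.isChain_nil
  | x :: L, h => by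
    rcases hL : FreeGroup.reduce L with - | ⟨hd, tl⟩
    · rw [FreeGroup.reduce.cons, hL] at h
      have h' : [x] = x :: L := h
      have hnil : L = [] := by
        have := h'.symm
        rw [List.cons.injEq] at this
        exact this.2
      subst hnil
      exact List.isChain_singleton x
    · rw [FreeGroup.reduce.cons, hL] at h
      have h' : (if x.1 = hd.1 ∧ x.2 = !hd.2 then tl else x :: hd :: tl) = x :: L := h
      by_cases hc : x.1 = hd.1 ∧ x.2 = !hd.2
      · exfalso
        rw [if_pos hc] at h'
        have hlen : (FreeGroup.reduce L).length ≤ L.length :=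
          FreeGroup.Red.length_le FreeGroup.reduce.red
        rw [hL] at hlen
        rw [h'] at hlen
        simp at hlen
      · rw [if_neg hc] at h'
        have hL2 : L = hd :: tl := by
          have := h'.symm
          rw [List.cons.injEq] at this
          exact this.2
        have hredL : FreeGroup.reduce L = L := by rw [hL, hL2]
        have ih := chain'_of_reduce_eq_self hredL
        rw [hL2]
        rw [hL2] at ih
        exact List.isChain_cons_cons.2 ⟨hc, ih⟩

theorem chain'_toWord {α : Type} [DecidableEq α] (w : FreeGroup α) :
    List.Chain' NC w.toWord :=
  chain'_of_reduce_eq_self (FreeGroup.reduce_toWord w)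

theorem mk_single_true {α : Type} (j : α) : FreeGroup.mk [(j, true)] = FreeGroup.of j := rfl

theorem mk_single_false {α : Type} (j : α) :
    FreeGroup.mk [(j, false)] = (FreeGroup.of j)⁻¹ := by
  rw [← mk_single_true, FreeGroup.inv_mk]
  simp [FreeGroup.invRev]

/-! ### The group ring setup -/

section

variable (n : ℕ)

abbrev Fr (n : ℕ) := FreeGroup (Fin (n + 1))

/-- The quotient map `F → F/R`. -/
noncomputable def pg (R : Subgroup (Fr n)) [R.Normal] : Fr n →* Fr n ⧸ R := QuotientGroup.mk' R

/-- The induced algebra map `ℤ[F] → ℤ[F/R]`. -/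
noncomputable def pa (R : Subgroup (Fr n)) [R.Normal] : MonoidAlgebra ℤ (Fr n) →ₐ[ℤ] MonoidAlgebra ℤ (Fr n ⧸ R) :=
  MonoidAlgebra.mapDomainAlgHom ℤ ℤ (QuotientGroup.mk' R)

theorem pa_of (R : Subgroup (Fr n)) [R.Normal] (w : Fr n) :
    pa n R (MonoidAlgebra.of ℤ (Fr n) w) = MonoidAlgebra.of ℤ (Fr n ⧸ R) (pg n R w) := by
  simp [pa, pg, MonoidAlgebra.of_apply, Finsupp.mapDomain_single]

theorem aug_of {J : Type} (w : FreeGroup J) : aug J (MonoidAlgebra.of ℤ (FreeGroup J) w) = 1 := by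
  rw [aug, MonoidAlgebra.lift_of]
  rfl

/-- The Fox derivative pushed down to `ℤ[F/R]`, as a function on group elements. -/
noncomputable def dl (R : Subgroup (Fr n)) [R.Normal] (D : MonoidAlgebra ℤ (Fr n) →ₗ[ℤ] MonoidAlgebra ℤ (Fr n)) (w : Fr n) : MonoidAlgebra ℤ (Fr n ⧸ R) :=
  pa n R (D (MonoidAlgebra.of ℤ (Fr n) w))

theorem D_one (D : MonoidAlgebra ℤ (Fr n) →ₗ[ℤ] MonoidAlgebra ℤ (Fr n)) (hD : IsFoxDerivative (Fin.last n) D) : D 1 = 0 := by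
  have h := hD.1 1 1
  have haug : aug (Fin (n + 1)) 1 = 1 := map_one _
  rw [haug, one_smul] at h
  simp only [mul_one] at h
  have h2 : D 1 + 0 = D 1 + D 1 := by rw [add_zero]; exact h
  exact (add_left_cancel h2).symm

theorem dl_mul (R : Subgroup (Fr n)) [R.Normal] (D : MonoidAlgebra ℤ (Fr n) →ₗ[ℤ] MonoidAlgebra ℤ (Fr n)) (hD : IsFoxDerivative (Fin.last n) D) (u v : Fr n) :
    dl n R D (u * v) =
      dl n R D u * MonoidAlgebra.of ℤ (Fr n ⧸ R) (pg n R v) + dl n R D v := by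
  have h := hD.1 (MonoidAlgebra.of ℤ (Fr n) u) (MonoidAlgebra.of ℤ (Fr n) v)
  rw [aug_of, one_smul] at h
  have h2 : D (MonoidAlgebra.of ℤ (Fr n) (u * v)) =
      D (MonoidAlgebra.of ℤ (Fr n) u) * MonoidAlgebra.of ℤ (Fr n) v
        + D (MonoidAlgebra.of ℤ (Fr n) v) := by
    rw [map_mul]; exact h
  unfold dl
  rw [h2, map_add, map_mul, pa_of]

theorem dl_one (R : Subgroup (Fr n)) [R.Normal] (D : MonoidAlgebra ℤ (Fr n) →ₗ[ℤ] MonoidAlgebra ℤ (Fr n)) (hD : IsFoxDerivative (Fin.last n) D) : dl n R D 1 = 0 := by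
  unfold dl
  rw [map_one, D_one n D hD, map_zero]

theorem dl_inv (R : Subgroup (Fr n)) [R.Normal] (D : MonoidAlgebra ℤ (Fr n) →ₗ[ℤ] MonoidAlgebra ℤ (Fr n)) (hD : IsFoxDerivative (Fin.last n) D) (w : Fr n) :
    dl n R D w⁻¹ = -(dl n R D w * MonoidAlgebra.of ℤ (Fr n ⧸ R) (pg n R w⁻¹)) := by
  have h := dl_mul n R D hD w w⁻¹
  rw [mul_inv_cancel, dl_one n R D hD] at h
  exact eq_neg_of_add_eq_zero_right h.symm

theorem dl_of (R : Subgroup (Fr n)) [R.Normal] (D : MonoidAlgebra ℤ (Fr n) →ₗ[ℤ] MonoidAlgebra ℤ (Fr n)) (hD : IsFoxDerivative (Fin.last n) D) (j : Fin (n + 1)) :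
    dl n R D (FreeGroup.of j) = if Fin.last n = j then 1 else 0 := by
  unfold dl
  rw [hD.2 j]
  split <;> simp

theorem dl_conj (R : Subgroup (Fr n)) [R.Normal] (D : MonoidAlgebra ℤ (Fr n) →ₗ[ℤ] MonoidAlgebra ℤ (Fr n)) (hD : IsFoxDerivative (Fin.last n) D) (r : Fr n)
    (h0 : dl n R D r = 0) (h1 : pg n R r = 1) (c : Fr n) :
    dl n R D (c * r * c⁻¹) = 0 := by
  have e2 := dl_mul n R D hD c c⁻¹
  rw [mul_inv_cancel, dl_one n R D hD] at e2
  have e1 : dl n R D (c * r * c⁻¹) =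
      dl n R D c * MonoidAlgebra.of ℤ (Fr n ⧸ R) (pg n R c⁻¹) + dl n R D c⁻¹ := by
    rw [mul_assoc, dl_mul n R D hD c (r * c⁻¹), dl_mul n R D hD r c⁻¹, h0, zero_mul, zero_add]
    congr 2
    rw [map_mul, h1, one_mul]
  rw [e1, ← e2]

/-! ### The path formula -/

/-- `Tv L i` is the image in `F/R` of the suffix of `L` starting at position `i`. -/
noncomputable def Tv (R : Subgroup (Fr n)) [R.Normal] (L : List (Fin (n + 1) × Bool)) (i : ℕ) : Fr n ⧸ R :=
  pg n R (FreeGroup.mk (L.drop i))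

/-- The `i`-th term of the path formula for the pushed-down Fox derivative. -/
noncomputable def term (R : Subgroup (Fr n)) [R.Normal] (L : List (Fin (n + 1) × Bool)) (i : ℕ) :
    MonoidAlgebra ℤ (Fr n ⧸ R) :=
  if h : i < L.length then
    (if (L.get ⟨i, h⟩).1 = Fin.last n then
      (if (L.get ⟨i, h⟩).2 then MonoidAlgebra.of ℤ (Fr n ⧸ R) (Tv n R L (i + 1))
       else -MonoidAlgebra.of ℤ (Fr n ⧸ R) (Tv n R L i))
     else 0)
  else 0

theorem term_succ (R : Subgroup (Fr n)) [R.Normal] (L : List (Fin (n + 1) × Bool)) (p : Fin (n + 1) × Bool) (i : ℕ) :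
    term n R (p :: L) (i + 1) = term n R L i := by
  by_cases h : i < L.length
  · have h' : i + 1 < (p :: L).length := by simpa using Nat.succ_lt_succ h
    rw [term, term, dif_pos h', dif_pos h]
    have hget : (p :: L).get ⟨i + 1, h'⟩ = L.get ⟨i, h⟩ := rfl
    have hT1 : Tv n R (p :: L) (i + 1 + 1) = Tv n R L (i + 1) := rfl
    have hT0 : Tv n R (p :: L) (i + 1) = Tv n R L i := rfl
    rw [hget, hT1, hT0]
  · have h' : ¬ i + 1 < (p :: L).length := by simp; omega
    rw [term, term, dif_neg h', dif_neg h]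

theorem delta_mk (R : Subgroup (Fr n)) [R.Normal] (D : MonoidAlgebra ℤ (Fr n) →ₗ[ℤ] MonoidAlgebra ℤ (Fr n)) (hD : IsFoxDerivative (Fin.last n) D) :
    ∀ L : List (Fin (n + 1) × Bool),
      dl n R D (FreeGroup.mk L) = ∑ i ∈ Finset.range L.length, term n R L i := by
  intro L
  induction L with
  | nil =>
    rw [← FreeGroup.one_eq_mk, dl_one n R D hD]
    simp
  | cons p L ih =>
    have hsplit : FreeGroup.mk (p :: L) = FreeGroup.mk [p] * FreeGroup.mk L := by
      rw [FreeGroup.mul_mk]; rfl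
    rw [hsplit, dl_mul n R D hD, ih]
    have hstep : ∑ i ∈ Finset.range ((p :: L).length), term n R (p :: L) i
        = (∑ i ∈ Finset.range L.length, term n R (p :: L) (i + 1)) + term n R (p :: L) 0 := by
      have h0 : ∑ i ∈ Finset.range ((p :: L).length), term n R (p :: L) i
          = ∑ i ∈ Finset.range (L.length + 1), term n R (p :: L) i := rfl
      rw [h0, Finset.sum_range_succ']
    rw [hstep, add_comm (∑ i ∈ Finset.range L.length, term n R (p :: L) (i + 1))
      (term n R (p :: L) 0)]
    congr 1
    · -- head term
      rcases p with ⟨j, b⟩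
      by_cases hj : j = Fin.last n
      · subst hj
        cases b
        · -- inverse letter
          rw [mk_single_false, dl_inv n R D hD, dl_of n R D hD, if_pos rfl, one_mul]
          rw [term, dif_pos (by simp : 0 < ((Fin.last n, false) :: L).length)]
          have hget : ((Fin.last n, false) :: L).get ⟨0, by simp⟩ = (Fin.last n, false) := rfl
          rw [hget, if_pos rfl, if_neg (by simp)]
          rw [neg_mul, ← map_mul, neg_inj]
          exact congrArg _ (by
            rw [Tv, List.drop_zero, ← map_mul, ← mk_single_false, FreeGroup.mul_mk,
              List.singleton_append])
        · -- positive letter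
          rw [mk_single_true, dl_of n R D hD, if_pos rfl, one_mul]
          rw [term, dif_pos (by simp : 0 < ((Fin.last n, true) :: L).length)]
          have hget : ((Fin.last n, true) :: L).get ⟨0, by simp⟩ = (Fin.last n, true) := rfl
          rw [hget, if_pos rfl, if_pos (by simp)]
          rfl
      · have hj' : ¬ (Fin.last n = j) := fun h => hj h.symm
        have hdl : dl n R D (FreeGroup.mk [(j, b)]) = 0 := by
          cases b
          · rw [mk_single_false, dl_inv n R D hD, dl_of n R D hD, if_neg hj', zero_mul, neg_zero]
          · rw [mk_single_true, dl_of n R D hD, if_neg hj']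
        rw [hdl, zero_mul, term, dif_pos (by simp : 0 < ((j, b) :: L).length)]
        have hget : ((j, b) :: L).get ⟨0, by simp⟩ = (j, b) := rfl
        rw [hget, if_neg hj]
    · exact (Finset.sum_congr rfl fun i _ => (term_succ n R L p i).symm)

/-! ### Membership in `H` for words avoiding the last generator -/

theorem mk_mem_closure (L : List (Fin (n + 1) × Bool))
    (hL : ∀ q ∈ L, q.1 ≠ Fin.last n) :
    FreeGroup.mk L ∈
      Subgroup.closure (FreeGroup.of '' {i : Fin (n + 1) | i ≠ Fin.last n}) := by
  induction L with
  | nil => rw [← FreeGroup.one_eq_mk]; exact Subgroup.one_mem _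
  | cons q L ih =>
    have hsplit : FreeGroup.mk (q :: L) = FreeGroup.mk [q] * FreeGroup.mk L := by
      rw [FreeGroup.mul_mk]; rfl
    rw [hsplit]
    have hq : FreeGroup.of q.1 ∈
        Subgroup.closure (FreeGroup.of '' {i : Fin (n + 1) | i ≠ Fin.last n}) :=
      Subgroup.subset_closure ⟨q.1, hL q List.mem_cons_self, rfl⟩
    have h1 : FreeGroup.mk [q] ∈
        Subgroup.closure (FreeGroup.of '' {i : Fin (n + 1) | i ≠ Fin.last n}) := by
      rcases q with ⟨j, b⟩
      cases b
      · rw [mk_single_false]; exact Subgroup.inv_mem _ hq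
      · rw [mk_single_true]; exact hq
    exact Subgroup.mul_mem _ h1 (ih fun q hq' => hL q (List.mem_cons_of_mem _ hq'))

/-! ### The key combinatorial lemma -/

theorem no_last_letter (R : Subgroup (Fr n)) [R.Normal] (D : MonoidAlgebra ℤ (Fr n) →ₗ[ℤ] MonoidAlgebra ℤ (Fr n)) (hD : IsFoxDerivative (Fin.last n) D)
    (L : List (Fin (n + 1) × Bool)) (hred : FreeGroup.reduce L = L)
    (hmem : FreeGroup.mk L ∈ R) (hne : FreeGroup.mk L ≠ 1)
    (hmin : ∀ z ∈ R, z ≠ 1 → L.length ≤ z.toWord.length)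
    (hdl : ∀ z ∈ R, dl n R D z = 0)
    (p : ℕ) (hp : p < L.length) (hql : (L.get ⟨p, hp⟩).1 = Fin.last n) : False := by
  classical
  have getcongr : ∀ (a b : ℕ) (ha : a < L.length) (hb : b < L.length), a = b →
      L.get ⟨a, ha⟩ = L.get ⟨b, hb⟩ := by
    intro a b ha hb h
    subst h
    rfl
  have prodeq : ∀ (q : Fin (n + 1) × Bool) (j : Fin (n + 1)) (b : Bool),
      q.1 = j → q.2 = b → q = (j, b) := by
    intro q j b h1 h2
    cases q
    simp_all
  -- distinctness of the partial products
  have key : ∀ a b : ℕ, a ≤ b → b ≤ L.length → Tv n R L a = Tv n R L b →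
      a = b ∨ (a = 0 ∧ b = L.length) := by
    intro a b hab hbm hT
    rcases eq_or_lt_of_le hab with h | h
    · exact Or.inl h
    · set seg := (L.drop a).take (b - a) with hseg
      have hsegapp : seg ++ L.drop b = L.drop a := by
        have h1 := List.take_append_drop (b - a) (L.drop a)
        rw [List.drop_drop] at h1
        rw [show a + (b - a) = b by omega] at h1
        exact h1
      have hpgseg : pg n R (FreeGroup.mk seg) = 1 := by
        have h2 : FreeGroup.mk (L.drop a) = FreeGroup.mk seg * FreeGroup.mk (L.drop b) := by
          rw [FreeGroup.mul_mk, hsegapp]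
        have h3 : Tv n R L a = pg n R (FreeGroup.mk seg) * Tv n R L b := by
          rw [Tv, h2, map_mul]; rfl
        rw [hT] at h3
        have h4 : (1 : Fr n ⧸ R) * Tv n R L b
            = pg n R (FreeGroup.mk seg) * Tv n R L b := by rw [one_mul]; exact h3
        exact (mul_right_cancel h4).symm
      have hsegR : FreeGroup.mk seg ∈ R := by
        have : ((FreeGroup.mk seg : Fr n) : Fr n ⧸ R) = 1 := hpgseg
        exact (QuotientGroup.eq_one_iff _).1 this
      have hinfix : seg <:+: L := by
        refine ⟨L.take a, L.drop b, ?_⟩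
        rw [List.append_assoc, hsegapp, List.take_append_drop]
      have hsegred : FreeGroup.reduce seg = seg :=
        reduce_eq_self_of_chain' ((chain'_of_reduce_eq_self hred).infix hinfix)
      have hlenseg : seg.length = b - a := by
        rw [hseg, List.length_take, List.length_drop]
        rw [min_eq_left (by omega)]
      have hsegnil : seg ≠ [] := by
        intro h0
        rw [h0] at hlenseg
        simp at hlenseg
        omega
      have hsegne : FreeGroup.mk seg ≠ 1 := by
        intro h0
        apply hsegnil
        have : (FreeGroup.mk seg).toWord = seg := by rw [FreeGroup.toWord_mk, hsegred]
        rw [h0, FreeGroup.toWord_one] at this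
        exact this.symm
      have hge := hmin _ hsegR hsegne
      rw [FreeGroup.toWord_mk, hsegred, hlenseg] at hge
      right
      omega
  have keysym : ∀ a b : ℕ, a ≤ L.length → b ≤ L.length →
      Tv n R L a = Tv n R L b →
      a = b ∨ (a = 0 ∧ b = L.length) ∨ (b = 0 ∧ a = L.length) := by
    intro a b ha hb hT
    rcases le_total a b with h | h
    · rcases key a b h hb hT with h1 | h1
      · exact Or.inl h1
      · exact Or.inr (Or.inl h1)
    · rcases key b a h ha hT.symm with h1 | h1
      · exact Or.inl h1.symm
      · exact Or.inr (Or.inr h1)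
  have hchain := chain'_of_reduce_eq_self hred
  -- wrap-around is impossible
  have wrap : ∀ (h0 : 0 < L.length) (hm : L.length - 1 < L.length),
      L.get ⟨0, h0⟩ = (Fin.last n, false) → L.get ⟨L.length - 1, hm⟩ = (Fin.last n, true) →
      False := by
    intro h0 hm hg0 hgm
    have hm2 : 2 ≤ L.length := by
      by_contra hle
      have h1 : L.length = 1 := by omega
      have hidx : (⟨0, h0⟩ : Fin L.length) = ⟨L.length - 1, hm⟩ := by
        apply Fin.ext; simp [h1]
      rw [hidx, hgm] at hg0
      simp at hg0
    rcases L with - | ⟨x, L'⟩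
    · simp at h0
    · have hL'ne : L' ≠ [] := by
        intro h1
        rw [h1] at hm2
        simp at hm2
      have hx : x = (Fin.last n, false) := hg0
      have hL'pos : 0 < L'.length := List.length_pos_iff.2 hL'ne
      have hlast : L'.getLast hL'ne = (Fin.last n, true) := by
        have h2 : (x :: L').length - 1 = (L'.length - 1) + 1 := by
          simp only [List.length_cons]; omega
        have h1 : (x :: L').get ⟨(x :: L').length - 1, hm⟩
            = L'[L'.length - 1]'(by omega) := by
          simp only [List.get_eq_getElem]
          simp only [h2, List.getElem_cons_succ]
        rw [List.getLast_eq_getElem, ← h1, hgm]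
      set Mid := L'.dropLast with hMid
      have hdecomp : x :: L' = (Fin.last n, false) :: (Mid ++ [(Fin.last n, true)]) := by
        rw [hx, hMid, ← hlast, List.dropLast_append_getLast hL'ne]
      set z : Fr n := FreeGroup.of (Fin.last n) * FreeGroup.mk (x :: L')
        * (FreeGroup.of (Fin.last n))⁻¹ with hz
      have hzR : z ∈ R := Subgroup.Normal.conj_mem ‹R.Normal› _ hmem _
      have hzne : z ≠ 1 := by
        intro h1
        apply hne
        rw [hz] at h1
        have h2 : FreeGroup.mk (x :: L')
            = (FreeGroup.of (Fin.last n))⁻¹ * 1 * FreeGroup.of (Fin.last n) := by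
          rw [← h1]; group
        rw [h2]; group
      have hzmk : z = FreeGroup.mk Mid := by
        have h2 : FreeGroup.mk (x :: L')
            = (FreeGroup.of (Fin.last n))⁻¹ * FreeGroup.mk Mid * FreeGroup.of (Fin.last n) := by
          rw [hdecomp]
          rw [← mk_single_false (Fin.last n), ← mk_single_true (Fin.last n)]
          rw [FreeGroup.mul_mk, FreeGroup.mul_mk]
          rfl
        rw [hz, h2]; group
      have hMidinfix : Mid <:+: (x :: L') := by
        refine ⟨[(Fin.last n, false)], [(Fin.last n, true)], ?_⟩
        rw [hdecomp]; rfl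
      have hMidred : FreeGroup.reduce Mid = Mid :=
        reduce_eq_self_of_chain' ((chain'_of_reduce_eq_self hred).infix hMidinfix)
      have hMidlen : Mid.length = (x :: L').length - 2 := by
        have h3 : (x :: L').length = Mid.length + 2 := by
          rw [hdecomp]; simp
        omega
      have hge := hmin z hzR hzne
      rw [hzmk, FreeGroup.toWord_mk, hMidred] at hge
      omega
  -- evaluate the path formula
  have hzero : dl n R D (FreeGroup.mk L) = 0 := hdl _ hmem
  rw [delta_mk n R D hD] at hzero
  set up : Fr n ⧸ R :=
    if (L.get ⟨p, hp⟩).2 then Tv n R L (p + 1) else Tv n R L p with hup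
  have happ : ∑ i ∈ Finset.range L.length, (term n R L i).coeff up = 0 := by
    rw [← Finsupp.finset_sum_apply, ← MonoidAlgebra.coeff_sum]
    rw [hzero]
    rfl
  have hneq : ∀ (i : ℕ) (hi : i < L.length), i ≠ p → (L.get ⟨i, hi⟩).1 = Fin.last n →
      (if (L.get ⟨i, hi⟩).2 then Tv n R L (i + 1) else Tv n R L i) ≠ up := by
    intro i hi hip hilast
    rw [hup]
    cases hbi : (L.get ⟨i, hi⟩).2 <;> cases hbp : (L.get ⟨p, hp⟩).2 <;>
      simp only [Bool.false_eq_true, if_true, if_false, ite_true, ite_false] <;> intro hT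
    · -- both false : Tv i = Tv p
      rcases keysym i p (le_of_lt hi) (le_of_lt hp) hT with h | h | h
      · exact hip h
      · omega
      · omega
    · -- i false, p true : Tv i = Tv (p+1)
      rcases keysym i (p + 1) (le_of_lt hi) (by omega) hT with h | h | h
      · -- i = p + 1 : adjacent letters cancel, contradicting reducedness
        have hplt : p < L.length - 1 := by omega
        have hadj : NC (L.get ⟨p, by omega⟩) (L.get ⟨p + 1, by omega⟩) :=
          (List.isChain_iff_getElem.1 hchain) p (by omega)
        apply hadj
        have hgi : L.get ⟨p + 1, by omega⟩ = L.get ⟨i, hi⟩ :=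
          getcongr _ _ (by omega) hi (by omega)
        constructor
        · rw [hgi, hilast, hql]
        · rw [hgi, hbi, hbp]; rfl
      · -- i = 0 and p + 1 = L.length : wrap-around
        apply wrap (by omega) (by omega)
        · have h9 : L.get ⟨0, by omega⟩ = L.get ⟨i, hi⟩ := getcongr _ _ (by omega) hi (by omega)
          rw [h9]
          exact prodeq _ _ _ hilast hbi
        · have h9 : L.get ⟨L.length - 1, by omega⟩ = L.get ⟨p, hp⟩ :=
            getcongr _ _ (by omega) hp (by omega)
          rw [h9]
          exact prodeq _ _ _ hql hbp
      · omega
    · -- i true, p false : Tv (i+1) = Tv p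
      rcases keysym (i + 1) p (by omega) (le_of_lt hp) hT with h | h | h
      · -- p = i + 1 : adjacency
        have hilt : i < L.length - 1 := by omega
        have hadj : NC (L.get ⟨i, by omega⟩) (L.get ⟨i + 1, by omega⟩) :=
          (List.isChain_iff_getElem.1 hchain) i (by omega)
        apply hadj
        have hgi : L.get ⟨i + 1, by omega⟩ = L.get ⟨p, hp⟩ :=
          getcongr _ _ (by omega) hp (by omega)
        constructor
        · rw [hgi, hilast, hql]
        · rw [hgi, hbi, hbp]; rfl
      · omega
      · -- p = 0 and i + 1 = L.length : wrap-around
        apply wrap (by omega) (by omega)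
        · have h9 : L.get ⟨0, by omega⟩ = L.get ⟨p, hp⟩ := getcongr _ _ (by omega) hp (by omega)
          rw [h9]
          exact prodeq _ _ _ hql hbp
        · have h9 : L.get ⟨L.length - 1, by omega⟩ = L.get ⟨i, hi⟩ :=
            getcongr _ _ (by omega) hi (by omega)
          rw [h9]
          exact prodeq _ _ _ hilast hbi
    · -- both true : Tv (i+1) = Tv (p+1)
      rcases keysym (i + 1) (p + 1) (by omega) (by omega) hT with h | h | h
      · exact hip (by omega)
      · omega
      · omega
  have hsingle : ∑ i ∈ Finset.range L.length, (term n R L i).coeff up = (term n R L p).coeff up := by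
    apply Finset.sum_eq_single_of_mem p (Finset.mem_range.2 hp)
    intro i hi hip
    have hi' : i < L.length := Finset.mem_range.1 hi
    rw [term, dif_pos hi']
    by_cases hil : (L.get ⟨i, hi'⟩).1 = Fin.last n
    · rw [if_pos hil]
      have hne' := hneq i hi' hip hil
      cases hbi : (L.get ⟨i, hi'⟩).2
      · rw [hbi] at hne'
        simp only [Bool.false_eq_true, if_true, if_false, ite_true, ite_false] at hne' ⊢
        rw [MonoidAlgebra.coeff_neg, Finsupp.neg_apply, MonoidAlgebra.of_apply, MonoidAlgebra.coeff_single, Finsupp.single_apply,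
          if_neg hne', neg_zero]
      · rw [hbi] at hne'
        simp only [Bool.false_eq_true, if_true, if_false, ite_true, ite_false] at hne' ⊢
        rw [MonoidAlgebra.of_apply, MonoidAlgebra.coeff_single, Finsupp.single_apply, if_neg hne']
    · rw [if_neg hil]
      rfl
  rw [hsingle] at happ
  rw [term, dif_pos hp, if_pos hql] at happ
  cases hbp : (L.get ⟨p, hp⟩).2
  · rw [hbp] at happ
    simp only [Bool.false_eq_true, if_true, if_false, ite_true, ite_false] at happ
    have hupv : up = Tv n R L p := by
      rw [hup, hbp]
      simp
    rw [hupv, MonoidAlgebra.coeff_neg, Finsupp.neg_apply, MonoidAlgebra.of_apply, MonoidAlgebra.coeff_single, Finsupp.single_apply,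
      if_pos rfl] at happ
    norm_num at happ
  · rw [hbp] at happ
    simp only [Bool.false_eq_true, if_true, if_false, ite_true, ite_false] at happ
    have hupv : up = Tv n R L (p + 1) := by
      rw [hup, hbp]
      simp
    rw [hupv, MonoidAlgebra.of_apply, MonoidAlgebra.coeff_single, Finsupp.single_apply, if_pos rfl] at happ
    norm_num at happ

end

end MagnusAux

/-- Magnus-type necessary condition: if `H ∩ R = 1` where `R` is the normal closure of
`r ≠ 1` and `H = ⟨x_1,…,x_n⟩` (all generators but the last), then
`D_{n+1}(r) ≢ 0 mod ℤ[F]·(R−1)`. -/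
theorem fox_derivative_ne_zero_of_inter_trivial (n : ℕ)
    (D : MonoidAlgebra ℤ (FreeGroup (Fin (n + 1))) →ₗ[ℤ] MonoidAlgebra ℤ (FreeGroup (Fin (n + 1))))
    (hD : IsFoxDerivative (Fin.last n) D)
    (r : FreeGroup (Fin (n + 1))) (hr : r ≠ 1)
    (R : Subgroup (FreeGroup (Fin (n + 1)))) (hR : R = Subgroup.normalClosure {r})
    (H : Subgroup (FreeGroup (Fin (n + 1))))
    (hH : H = Subgroup.closure (FreeGroup.of '' {i : Fin (n + 1) | i ≠ Fin.last n}))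
    (hHR : H ⊓ R = ⊥) :
    D (MonoidAlgebra.of ℤ (FreeGroup (Fin (n + 1))) r) ∉ NIdeal R := by
  classical
  intro hmem
  subst hR
  subst hH
  set R := Subgroup.normalClosure {r} with hRdef
  haveI : R.Normal := Subgroup.normalClosure_normal
  -- `pa` kills `NIdeal R`
  have hker : ∀ x ∈ NIdeal R, MagnusAux.pa n R x = 0 := by
    intro x hx
    rw [NIdeal] at hx
    refine Submodule.span_induction ?_ ?_ ?_ ?_ hx
    · rintro a ⟨u, ρ, hρ, rfl⟩
      rw [map_mul, map_sub, map_one, MagnusAux.pa_of]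
      have hρ1 : MagnusAux.pg n R ρ = 1 := by
        have : ((ρ : FreeGroup (Fin (n + 1))) : FreeGroup (Fin (n + 1)) ⧸ R) = 1 :=
          (QuotientGroup.eq_one_iff _).2 hρ
        exact this
      rw [hρ1, map_one, sub_self, mul_zero]
    · exact map_zero _
    · intro a b _ _ ha hb
      rw [map_add, ha, hb, add_zero]
    · intro m a _ ha
      rw [map_smul, ha, smul_zero]
  have h0 : MagnusAux.dl n R D r = 0 := hker _ hmem
  have hrR : r ∈ R := Subgroup.subset_normalClosure rfl
  have hrpg : MagnusAux.pg n R r = 1 := (QuotientGroup.eq_one_iff _).2 hrR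
  -- `dl` vanishes on all of `R`
  have hRS : ∀ z ∈ R, MagnusAux.dl n R D z = 0 := by
    let S : Subgroup (FreeGroup (Fin (n + 1))) :=
      { carrier := {w | MagnusAux.dl n R D w = 0}
        one_mem' := MagnusAux.dl_one n R D hD
        mul_mem' := by
          intro a b ha hb
          have := MagnusAux.dl_mul n R D hD a b
          simp only [Set.mem_setOf_eq] at ha hb ⊢
          rw [this, ha, hb, zero_mul, add_zero]
        inv_mem' := by
          intro a ha
          simp only [Set.mem_setOf_eq] at ha ⊢
          rw [MagnusAux.dl_inv n R D hD, ha, zero_mul, neg_zero] }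
    have hle : R ≤ S := by
      have hsub : Group.conjugatesOfSet {r} ⊆ (S : Set (FreeGroup (Fin (n + 1)))) := by
        intro x hx
        rcases Group.mem_conjugatesOfSet_iff.1 hx with ⟨a, ha, hconj⟩
        rcases Set.mem_singleton_iff.1 ha with rfl
        rcases isConj_iff.1 hconj with ⟨c, rfl⟩
        exact MagnusAux.dl_conj n R D hD a h0 hrpg c
      have : Subgroup.normalClosure {r} = Subgroup.closure (Group.conjugatesOfSet {r}) := rfl
      rw [hRdef, this]
      exact (Subgroup.closure_le S).2 hsub
    exact fun z hz => hle hz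
  -- pick a minimal nontrivial element of `R`
  have hex : ∃ m : ℕ, ∃ w : FreeGroup (Fin (n + 1)),
      w ∈ R ∧ w ≠ 1 ∧ w.toWord.length = m := ⟨r.toWord.length, r, hrR, hr, rfl⟩
  obtain ⟨w, hwR, hw1, hwlen⟩ := Nat.find_spec hex
  have hmin : ∀ z ∈ R, z ≠ 1 → w.toWord.length ≤ z.toWord.length := by
    intro z hz h1
    rw [hwlen]
    exact Nat.find_min' hex ⟨z, hz, h1, rfl⟩
  set L := w.toWord with hL
  have hred : FreeGroup.reduce L = L := FreeGroup.reduce_toWord w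
  have hmk : FreeGroup.mk L = w := FreeGroup.mk_toWord
  by_cases hl : ∃ (i : ℕ) (hi : i < L.length), (L.get ⟨i, hi⟩).1 = Fin.last n
  · obtain ⟨i, hi, hil⟩ := hl
    exact MagnusAux.no_last_letter n R D hD L hred (hmk ▸ hwR) (hmk ▸ hw1)
      (fun z hz h1 => hmin z hz h1) hRS i hi hil
  · have hall : ∀ q ∈ L, q.1 ≠ Fin.last n := by
      intro q hq hq1
      rcases List.get_of_mem hq with ⟨⟨i, hi⟩, rfl⟩
      exact hl ⟨i, hi, hq1⟩
    have hwH : w ∈ Subgroup.closure (FreeGroup.of '' {i : Fin (n + 1) | i ≠ Fin.last n}) := by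
      rw [← hmk]
      exact MagnusAux.mk_mem_closure n L hall
    have : w ∈ Subgroup.closure (FreeGroup.of '' {i : Fin (n + 1) | i ≠ Fin.last n}) ⊓ R :=
      ⟨hwH, hwR⟩
    rw [hHR] at this
    exact hw1 (Subgroup.mem_bot.1 this)
end

section
/- Let F be a free group with basis {g_j | j ∈ J}, K ⊆ J, H the subgroup generated by {g_j | j ∈ K}, R a normal subgroup of F, and M the set of all normal subgroups of F contained in R. If H ∩ R = 1, then for every N ∈ M and every v ∈ N: if D_k(v) ≡ 0 mod ℤ[F]·(N−1) for all k ∈ J \ K, then v ∈ [N,N]. -/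
open scoped Classical

namespace FoxAux

variable {J : Type}

noncomputable def γ {J : Type} (f : FreeGroup J) : MonoidAlgebra ℤ (FreeGroup J) :=
  MonoidAlgebra.of ℤ (FreeGroup J) f

lemma γ_mul (f g : FreeGroup J) : γ (f * g) = γ f * γ g := map_mul _ _ _

lemma γ_one : γ (1 : FreeGroup J) = 1 := map_one _

lemma aug_γ (f : FreeGroup J) : aug J (γ f) = 1 := by
  simp [aug, γ, MonoidAlgebra.lift_of]

lemma D_one (D : MonoidAlgebra ℤ (FreeGroup J) →ₗ[ℤ] MonoidAlgebra ℤ (FreeGroup J))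
    (hd : ∀ u v, D (u * v) = D u * v + (aug J u) • D v) : D 1 = 0 := by
  have h := hd 1 1
  simp only [mul_one, map_one, one_smul] at h
  exact (left_eq_add.mp h)

lemma D_γ_mul {D : MonoidAlgebra ℤ (FreeGroup J) →ₗ[ℤ] MonoidAlgebra ℤ (FreeGroup J)}
    (hd : ∀ u v, D (u * v) = D u * v + (aug J u) • D v) (f : FreeGroup J)
    (x : MonoidAlgebra ℤ (FreeGroup J)) :
    D (γ f * x) = D (γ f) * x + D x := by
  rw [hd (γ f) x, aug_γ, one_smul]

lemma fox_identity (D : J → (MonoidAlgebra ℤ (FreeGroup J) →ₗ[ℤ] MonoidAlgebra ℤ (FreeGroup J)))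
    (hD : ∀ j, IsFoxDerivative j (D j)) (w : FreeGroup J) :
    ∃ s : Finset J, (∀ j, j ∉ s → D j (γ w) = 0) ∧
      γ w - 1 = ∑ j ∈ s, (γ (FreeGroup.of j) - 1) * D j (γ w) := by
  induction w using FreeGroup.induction_on with
  | C1 =>
      refine ⟨∅, fun j _ => ?_, by simp [γ_one]⟩
      show D j (γ 1) = 0
      rw [γ_one]
      exact D_one (D j) (hD j).1
  | of i =>
      refine ⟨{i}, fun j hj => ?_, ?_⟩
      · show D j (γ (FreeGroup.of i)) = 0
        rw [show D j (γ (FreeGroup.of i)) = if j = i then 1 else 0 from (hD j).2 i,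
          if_neg (by simpa using hj)]
      · show γ (FreeGroup.of i) - 1 =
          ∑ j ∈ {i}, (γ (FreeGroup.of j) - 1) * D j (γ (FreeGroup.of i))
        rw [Finset.sum_singleton,
          show D i (γ (FreeGroup.of i)) = if i = i then 1 else 0 from (hD i).2 i,
          if_pos rfl, mul_one]
  | inv_of i _ =>
      have key : ∀ j, D j (γ (FreeGroup.of i)⁻¹) =
          -((if j = i then 1 else 0) * γ (FreeGroup.of i)⁻¹) := by
        intro j
        have h1 : γ (FreeGroup.of i) * γ (FreeGroup.of i)⁻¹ = 1 := by
          rw [← γ_mul, mul_inv_cancel, γ_one]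
        have h0 : D j (γ (FreeGroup.of i) * γ (FreeGroup.of i)⁻¹) = 0 := by
          rw [h1]; exact D_one (D j) (hD j).1
        rw [D_γ_mul (hD j).1] at h0
        rw [show D j (γ (FreeGroup.of i)) = if j = i then 1 else 0 from (hD j).2 i] at h0
        exact (eq_neg_of_add_eq_zero_right h0)
      refine ⟨{i}, fun j hj => ?_, ?_⟩
      · show D j (γ (FreeGroup.of i)⁻¹) = 0
        rw [key j, if_neg (by simpa using hj), zero_mul, neg_zero]
      · show γ (FreeGroup.of i)⁻¹ - 1 =
          ∑ j ∈ {i}, (γ (FreeGroup.of j) - 1) * D j (γ (FreeGroup.of i)⁻¹)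
        rw [Finset.sum_singleton, key i, if_pos rfl, one_mul]
        have h1 : γ (FreeGroup.of i) * γ (FreeGroup.of i)⁻¹ = 1 := by
          rw [← γ_mul, mul_inv_cancel, γ_one]
        rw [mul_neg, sub_mul, one_mul, h1, neg_sub]
  | mul x y ihx ihy =>
      obtain ⟨sx, hx0, hx⟩ := ihx
      obtain ⟨sy, hy0, hy⟩ := ihy
      refine ⟨sx ∪ sy, fun j hj => ?_, ?_⟩
      · rw [γ_mul, D_γ_mul (hD j).1, hx0 j (fun h => hj (Finset.mem_union_left _ h)),
          hy0 j (fun h => hj (Finset.mem_union_right _ h)), zero_mul, add_zero]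
      · have hDxy : ∀ j, D j (γ (x * y)) = D j (γ x) * γ y + D j (γ y) := by
          intro j; rw [γ_mul]; exact D_γ_mul (hD j).1 x (γ y)
        calc γ (x * y) - 1 = (γ x - 1) * γ y + (γ y - 1) := by
              rw [γ_mul]; noncomm_ring
          _ = (∑ j ∈ sx ∪ sy, (γ (FreeGroup.of j) - 1) * D j (γ x)) * γ y
              + ∑ j ∈ sx ∪ sy, (γ (FreeGroup.of j) - 1) * D j (γ y) := by
              rw [← Finset.sum_subset (Finset.subset_union_left (s₂ := sy))
                  (fun j _ hj => by rw [hx0 j hj, mul_zero]),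
                ← Finset.sum_subset (Finset.subset_union_right (s₁ := sx))
                  (fun j _ hj => by rw [hy0 j hj, mul_zero]), ← hx, ← hy]
          _ = ∑ j ∈ sx ∪ sy, (γ (FreeGroup.of j) - 1) * D j (γ (x * y)) := by
              rw [Finset.sum_mul, ← Finset.sum_add_distrib]
              refine Finset.sum_congr rfl fun j _ => ?_
              rw [hDxy j, mul_add, mul_assoc]


lemma sub_one_mem {N : Subgroup (FreeGroup J)} {n : FreeGroup J} (hn : n ∈ N) :
    γ n - 1 ∈ NIdeal N :=
  Submodule.subset_span ⟨1, n, hn, by rw [one_mul]; rfl⟩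

lemma mul_left_mem {N : Subgroup (FreeGroup J)} (x : MonoidAlgebra ℤ (FreeGroup J))
    {y : MonoidAlgebra ℤ (FreeGroup J)} (hy : y ∈ NIdeal N) : x * y ∈ NIdeal N := by
  induction hy using Submodule.span_induction with
  | mem a ha =>
      obtain ⟨u, n, hn, rfl⟩ := ha
      exact Submodule.subset_span ⟨x * u, n, hn, by rw [mul_assoc]⟩
  | zero => rw [mul_zero]; exact zero_mem _
  | add a b _ _ iha ihb => rw [mul_add]; exact add_mem iha ihb
  | smul c a _ iha => rw [mul_smul_comm]; exact Submodule.smul_mem _ c iha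

/-- A "HN-transversal": choice of the H-component for the decomposition F = H · T · N. -/
lemma exists_hpart (H N : Subgroup (FreeGroup J)) (hN : N.Normal) (hHN : H ⊓ N = ⊥) :
    ∃ hp : FreeGroup J → FreeGroup J, (∀ f, hp f ∈ H) ∧
      (∀ f n, n ∈ N → hp (f * n) = hp f) ∧
      (∀ h f, h ∈ H → hp (h * f) = h * hp f) := by
  set r : FreeGroup J → FreeGroup J → Prop :=
    fun f f' => ∃ h ∈ H, ∃ n ∈ N, f = h * f' * n with hr
  have hrefl : ∀ f, r f f := fun f => ⟨1, one_mem _, 1, one_mem _, by group⟩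
  have hsymm : ∀ {f f'}, r f f' → r f' f := by
    rintro f f' ⟨h, hh, n, hn, rfl⟩
    exact ⟨h⁻¹, inv_mem hh, n⁻¹, inv_mem hn, by group⟩
  have htrans : ∀ {f f' f''}, r f f' → r f' f'' → r f f'' := by
    rintro f f' f'' ⟨h, hh, n, hn, rfl⟩ ⟨h', hh', n', hn', rfl⟩
    exact ⟨h * h', mul_mem hh hh', n' * n, mul_mem hn' hn, by group⟩
  set S : Setoid (FreeGroup J) := ⟨r, hrefl, hsymm, htrans⟩ with hS
  set t : FreeGroup J → FreeGroup J := fun f => (Quotient.mk S f).out with ht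
  have key : ∀ f, r f (t f) := by
    intro f
    have : Quotient.mk S (t f) = Quotient.mk S f := Quotient.out_eq _
    exact hsymm (Quotient.exact this)
  -- uniqueness of the H-component over a fixed transversal element
  have uniq : ∀ {a h h' n n'}, h ∈ H → h' ∈ H → n ∈ N → n' ∈ N →
      h * a * n = h' * a * n' → h = h' := by
    intro a h h' n n' hh hh' hn hn' he
    have e2 : h'⁻¹ * h = a * (n' * n⁻¹) * a⁻¹ := by
      have := congrArg (fun z => h'⁻¹ * z * n⁻¹ * a⁻¹) he
      simpa [mul_assoc] using this
    have hmemN : h'⁻¹ * h ∈ N := by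
      rw [e2]; exact hN.conj_mem _ (mul_mem hn' (inv_mem hn)) _
    have hmemH : h'⁻¹ * h ∈ H := mul_mem (inv_mem hh') hh
    have : h'⁻¹ * h ∈ H ⊓ N := ⟨hmemH, hmemN⟩
    rw [hHN, Subgroup.mem_bot] at this
    exact (inv_mul_eq_one.mp this).symm
  have keyt : ∀ f f', r f f' → t f = t f' := by
    intro f f' hrel
    exact congrArg Quotient.out (@Quotient.sound _ S _ _ hrel)
  refine ⟨fun f => (key f).choose, ?_, ?_, ?_⟩
  · intro f; exact (key f).choose_spec.1
  · intro f n hn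
    obtain ⟨hmem, n1, hn1, he1⟩ := (key (f * n)).choose_spec
    obtain ⟨hmem2, n2, hn2, he2⟩ := (key f).choose_spec
    have htt : t (f * n) = t f := keyt _ _ ⟨1, one_mem _, n, hn, by group⟩
    have he1' : f * n = (key (f * n)).choose * t f * n1 := by
      rw [← htt]; exact he1
    have he2' : f * n = (key f).choose * t f * (n2 * n) := by
      rw [← mul_assoc, ← he2]
    exact uniq hmem hmem2 hn1 (mul_mem hn2 hn) (he1'.symm.trans he2')
  · intro h f hh
    obtain ⟨hmem, n1, hn1, he1⟩ := (key (h * f)).choose_spec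
    obtain ⟨hmem2, n2, hn2, he2⟩ := (key f).choose_spec
    have htt : t (h * f) = t f := keyt _ _ ⟨h, hh, 1, one_mem _, by group⟩
    have he1' : h * f = (key (h * f)).choose * t f * n1 := by
      rw [← htt]; exact he1
    have he2' : h * f = (h * (key f).choose) * t f * n2 := by
      simpa [mul_assoc] using congrArg (h * ·) he2
    exact uniq hmem (mul_mem hh hmem2) hn1 hn2 (he1'.symm.trans he2')

/-- N-coset decomposition: `f = t f * w f` with `w f ∈ N`. -/
lemma exists_npart (N : Subgroup (FreeGroup J)) :
    ∃ w : FreeGroup J → FreeGroup J, (∀ f, w f ∈ N) ∧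
      (∀ f n, n ∈ N → w (f * n) = w f * n) := by
  set r : FreeGroup J → FreeGroup J → Prop := fun f f' => ∃ n ∈ N, f = f' * n with hr
  have hrefl : ∀ f, r f f := fun f => ⟨1, one_mem _, by group⟩
  have hsymm : ∀ {f f'}, r f f' → r f' f := by
    rintro f f' ⟨n, hn, rfl⟩; exact ⟨n⁻¹, inv_mem hn, by group⟩
  have htrans : ∀ {f f' f''}, r f f' → r f' f'' → r f f'' := by
    rintro f f' f'' ⟨n, hn, rfl⟩ ⟨n', hn', rfl⟩
    exact ⟨n' * n, mul_mem hn' hn, by group⟩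
  set S : Setoid (FreeGroup J) := ⟨r, hrefl, hsymm, htrans⟩ with hS
  set t : FreeGroup J → FreeGroup J := fun f => (Quotient.mk S f).out with ht
  have key : ∀ f, r f (t f) := by
    intro f
    have : Quotient.mk S (t f) = Quotient.mk S f := Quotient.out_eq _
    exact hsymm (Quotient.exact this)
  have keyt : ∀ f f', r f f' → t f = t f' := by
    intro f f' hrel
    exact congrArg Quotient.out (@Quotient.sound _ S _ _ hrel)
  refine ⟨fun f => (key f).choose, fun f => (key f).choose_spec.1, ?_⟩
  intro f n hn
  obtain ⟨hm1, he1⟩ := (key (f * n)).choose_spec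
  obtain ⟨hm2, he2⟩ := (key f).choose_spec
  have htt : t (f * n) = t f := keyt _ _ ⟨n, hn, rfl⟩
  have he1' : f * n = t f * (key (f * n)).choose := by
    rw [← htt]; exact he1
  have : t f * ((key f).choose * n) = t f * (key (f * n)).choose := by
    rw [← mul_assoc, ← he2, ← he1']
  exact (mul_left_cancel this).symm


lemma mem_commutator_of (N : Subgroup (FreeGroup J)) (v : FreeGroup J) (hv : v ∈ N)
    (hmem : γ v - 1 ∈ Submodule.span ℤ
      {a | ∃ g : FreeGroup J, ∃ x ∈ NIdeal N, a = (γ g - 1) * x}) :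
    v ∈ (⁅N, N⁆ : Subgroup (FreeGroup J)) := by
  obtain ⟨w, hw, hwmul⟩ := exists_npart N
  set φ : FreeGroup J → Additive (Abelianization ↥N) :=
    fun f => Additive.ofMul (Abelianization.of (⟨w f, hw f⟩ : ↥N)) with hφ
  set ρ : MonoidAlgebra ℤ (FreeGroup J) →ₗ[ℤ] Additive (Abelianization ↥N) :=
    Finsupp.lift (Additive (Abelianization ↥N)) ℤ (FreeGroup J) φ ∘ₗ
      (MonoidAlgebra.coeffLinearEquiv ℤ).toLinearMap with hρ
  have ρ_single : ∀ (f : FreeGroup J) (c : ℤ), ρ (MonoidAlgebra.single f c) = c • φ f := by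
    intro f c
    have h1 : ρ (MonoidAlgebra.single f c) = (Finsupp.single f c).sum fun a b => b • φ a := rfl
    rw [h1]
    exact Finsupp.sum_single_index (zero_smul ℤ (φ f))
  have ρ_γ : ∀ f : FreeGroup J, ρ (γ f) = φ f := by
    intro f
    have : γ f = MonoidAlgebra.single f (1 : ℤ) := rfl
    rw [this, ρ_single, one_smul]
  have φ_mul : ∀ (f n : FreeGroup J) (hn : n ∈ N),
      φ (f * n) = φ f + Additive.ofMul (Abelianization.of (⟨n, hn⟩ : ↥N)) := by
    intro f n hn
    have hsub : (⟨w (f * n), hw _⟩ : ↥N) = ⟨w f, hw f⟩ * ⟨n, hn⟩ :=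
      Subtype.ext (hwmul f n hn)
    show Additive.ofMul (Abelianization.of (⟨w (f * n), hw _⟩ : ↥N)) = _
    rw [hsub, map_mul]
    rfl
  have claim1 : ∀ (g : FreeGroup J), ∀ x ∈ NIdeal N, ρ (γ g * x) = ρ x := by
    intro g x hx
    induction hx using Submodule.span_induction with
    | mem a ha =>
        obtain ⟨u, n, hn, rfl⟩ := ha
        show ρ (γ g * (u * (γ n - 1))) = ρ (u * (γ n - 1))
        induction u using MonoidAlgebra.induction_on with
        | of f =>
            show ρ (γ g * (γ f * (γ n - 1))) = ρ (γ f * (γ n - 1))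
            have e1 : γ g * (γ f * (γ n - 1)) = γ (g * (f * n)) - γ (g * f) := by
              simp only [mul_sub, mul_one, ← γ_mul, mul_assoc]
            have e2 : (γ f : MonoidAlgebra ℤ (FreeGroup J)) * (γ n - 1) = γ (f * n) - γ f := by
              simp only [mul_sub, mul_one, ← γ_mul]
            rw [e1, e2, map_sub, map_sub, ρ_γ, ρ_γ, ρ_γ, ρ_γ, ← mul_assoc,
              φ_mul (g * f) n hn, φ_mul f n hn, add_sub_cancel_left, add_sub_cancel_left]
        | add p q hp hq =>
            rw [add_mul, mul_add, map_add, map_add, hp, hq]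
        | smul c p hp =>
            rw [smul_mul_assoc, mul_smul_comm, map_smul, map_smul, hp]
    | zero => rw [mul_zero]
    | add a b _ _ iha ihb => rw [mul_add, map_add, map_add, iha, ihb]
    | smul c a _ iha => rw [mul_smul_comm, map_smul, map_smul, iha]
  have claim2 : ρ (γ v - 1) = 0 := by
    have hle : Submodule.span ℤ
        {a | ∃ g : FreeGroup J, ∃ x ∈ NIdeal N, a = (γ g - 1) * x} ≤ LinearMap.ker ρ := by
      rw [Submodule.span_le]
      rintro a ⟨g, x, hxmem, rfl⟩
      rw [SetLike.mem_coe, LinearMap.mem_ker, sub_mul, one_mul, map_sub, claim1 g x hxmem,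
        sub_self]
    exact LinearMap.mem_ker.mp (hle hmem)
  have e3 : ρ (γ v - 1) = φ v - φ 1 := by
    rw [map_sub, ρ_γ, show (1 : MonoidAlgebra ℤ (FreeGroup J)) = γ 1 from γ_one.symm, ρ_γ]
  have e4 : φ v = φ 1 + Additive.ofMul (Abelianization.of (⟨v, hv⟩ : ↥N)) := by
    have h5 := φ_mul 1 v hv
    rwa [one_mul] at h5
  rw [e3, e4, add_sub_cancel_left] at claim2
  have h1 : Abelianization.of (⟨v, hv⟩ : ↥N) = 1 := ofMul_eq_zero.mp claim2
  have h2 : (⟨v, hv⟩ : ↥N) ∈ commutator ↥N := by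
    have h3 : ((⟨v, hv⟩ : ↥N) : ↥N ⧸ commutator ↥N) = 1 := h1
    exact (QuotientGroup.eq_one_iff _).mp h3
  have hmap : Subgroup.map N.subtype (commutator ↥N) = ⁅N, N⁆ := by
    rw [commutator_def, Subgroup.map_commutator, ← MonoidHom.range_eq_map, N.range_subtype]
  rw [← hmap]
  exact ⟨⟨v, hv⟩, h2, rfl⟩


end FoxAux

open FoxAux

/-- If `H ∩ R = 1`, then for every normal subgroup `N ⊆ R` and every `v ∈ N`,
`D_k(v) ≡ 0 mod ℤ[F]·(N−1)` for all `k ∈ J \ K` implies `v ∈ [N,N]`. -/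
theorem commutator_mem_of_inter_trivial {J : Type} (K : Set J)
    (H : Subgroup (FreeGroup J)) (hH : H = Subgroup.closure (FreeGroup.of '' K))
    (R : Subgroup (FreeGroup J)) (hR : R.Normal)
    (D : J → (MonoidAlgebra ℤ (FreeGroup J) →ₗ[ℤ] MonoidAlgebra ℤ (FreeGroup J)))
    (hD : ∀ j, IsFoxDerivative j (D j))
    (hHR : H ⊓ R = ⊥) :
    ∀ N : Subgroup (FreeGroup J), N.Normal → N ≤ R → ∀ v ∈ N,
      (∀ k, k ∉ K → D k (MonoidAlgebra.of ℤ (FreeGroup J) v) ∈ NIdeal N) →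
        v ∈ (⁅N, N⁆ : Subgroup (FreeGroup J)) := by
  intro N hN hNR v hv hvD
  have hHN : H ⊓ N = ⊥ := by
    have h1 : H ⊓ N ≤ H ⊓ R := inf_le_inf_left H hNR
    rw [hHR] at h1
    exact le_bot_iff.mp h1
  have hgK : ∀ j ∈ K, FreeGroup.of j ∈ H := by
    intro j hj
    rw [hH]
    exact Subgroup.subset_closure ⟨j, hj, rfl⟩
  obtain ⟨hp, hp_mem, hp_n, hp_h⟩ := FoxAux.exists_hpart H N hN hHN
  obtain ⟨s, hs0, hsum⟩ := FoxAux.fox_identity D hD v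
  have hvD' : ∀ k, k ∉ K → D k (γ v) ∈ NIdeal N := hvD
  have hD2 : ∀ kk j : J, D kk (γ (FreeGroup.of j)) = if kk = j then 1 else 0 :=
    fun kk j => (hD kk).2 j
  have hDmem : ∀ j, D j (γ v) ∈ NIdeal N := by
    intro k
    by_cases hks : k ∈ s
    case neg => rw [hs0 k hks]; exact zero_mem _
    by_cases hkK : k ∈ K
    case neg => exact hvD' k hkK
    -- construct the retraction Φ for the generator k ∈ K
    set φf : FreeGroup J → (MonoidAlgebra ℤ (FreeGroup J) ⧸ NIdeal N) :=
      fun f => Submodule.Quotient.mk (D k (γ (hp f)) * γ ((hp f)⁻¹ * f)) with hφf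
    set Φ : MonoidAlgebra ℤ (FreeGroup J) →ₗ[ℤ] (MonoidAlgebra ℤ (FreeGroup J) ⧸ NIdeal N) :=
      Finsupp.lift _ ℤ (FreeGroup J) φf ∘ₗ
        (MonoidAlgebra.coeffLinearEquiv ℤ).toLinearMap with hΦ
    have Φ_single : ∀ (f : FreeGroup J) (c : ℤ), Φ (MonoidAlgebra.single f c) = c • φf f := by
      intro f c
      have h1 : Φ (MonoidAlgebra.single f c) = (Finsupp.single f c).sum fun a b => b • φf a := rfl
      rw [h1]
      exact Finsupp.sum_single_index (zero_smul _ _)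
    have Φ_γ : ∀ f : FreeGroup J, Φ (γ f) = φf f := by
      intro f
      have : γ f = MonoidAlgebra.single f (1 : ℤ) := rfl
      rw [this, Φ_single, one_smul]
    have Φ_zero : ∀ x ∈ NIdeal N, Φ x = 0 := by
      intro x hx
      induction hx using Submodule.span_induction with
      | mem a ha =>
          obtain ⟨u, n, hn, rfl⟩ := ha
          show Φ (u * (γ n - 1)) = 0
          induction u using MonoidAlgebra.induction_on with
          | of f =>
              show Φ (γ f * (γ n - 1)) = 0
              have e : γ f * (γ n - 1) = γ (f * n) - γ f := by
                simp only [mul_sub, mul_one, ← γ_mul]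
              rw [e, map_sub, Φ_γ, Φ_γ]
              have hEq : φf (f * n) = φf f := by
                show Submodule.Quotient.mk (D k (γ (hp (f * n))) * γ ((hp (f * n))⁻¹ * (f * n)))
                  = Submodule.Quotient.mk (D k (γ (hp f)) * γ ((hp f)⁻¹ * f))
                rw [hp_n f n hn, Submodule.Quotient.eq,
                  show (hp f)⁻¹ * (f * n) = ((hp f)⁻¹ * f) * n from (mul_assoc _ _ _).symm, γ_mul,
                  show D k (γ (hp f)) * (γ ((hp f)⁻¹ * f) * γ n) - D k (γ (hp f)) * γ ((hp f)⁻¹ * f)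
                    = (D k (γ (hp f)) * γ ((hp f)⁻¹ * f)) * (γ n - 1) by noncomm_ring]
                exact Submodule.subset_span ⟨_, n, hn, rfl⟩
              rw [hEq, sub_self]
          | add p q hpp hqq => rw [add_mul, map_add, hpp, hqq, add_zero]
          | smul c p hpp => rw [smul_mul_assoc, map_smul, hpp, smul_zero]
      | zero => exact map_zero _
      | add a b _ _ iha ihb => rw [map_add, iha, ihb, add_zero]
      | smul c a _ iha => rw [map_smul, iha, smul_zero]
    have Φ_gen : ∀ j ∈ K, ∀ u, Φ ((γ (FreeGroup.of j) - 1) * u)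
        = if k = j then Submodule.Quotient.mk u else 0 := by
      intro j hj u
      induction u using MonoidAlgebra.induction_on with
      | of f =>
          show Φ ((γ (FreeGroup.of j) - 1) * γ f) = _
          have e : (γ (FreeGroup.of j) - 1) * γ f = γ (FreeGroup.of j * f) - γ f := by
            simp only [sub_mul, one_mul, ← γ_mul]
          rw [e, map_sub, Φ_γ, Φ_γ]
          have hp_eq : hp (FreeGroup.of j * f) = FreeGroup.of j * hp f := hp_h _ f (hgK j hj)
          have hinv : (FreeGroup.of j * hp f)⁻¹ * (FreeGroup.of j * f) = (hp f)⁻¹ * f := by group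
          have hD1 : D k (γ (FreeGroup.of j * hp f))
              = (if k = j then 1 else 0) * γ (hp f) + D k (γ (hp f)) := by
            rw [γ_mul, FoxAux.D_γ_mul (hD k).1, hD2 k j]
          have hstep : φf (FreeGroup.of j * f)
              = (if k = j then Submodule.Quotient.mk (γ f) else 0) + φf f := by
            show Submodule.Quotient.mk
                (D k (γ (hp (FreeGroup.of j * f))) * γ ((hp (FreeGroup.of j * f))⁻¹ * (FreeGroup.of j * f)))
              = _
            rw [hp_eq, hinv, hD1, add_mul]
            by_cases hkj : k = j
            · rw [if_pos hkj, if_pos hkj, one_mul, ← γ_mul,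
                show hp f * ((hp f)⁻¹ * f) = f by group]
              exact Submodule.Quotient.mk_add (NIdeal N)
            · rw [if_neg hkj, if_neg hkj]
              simp only [zero_mul, zero_add]
              rfl
          rw [hstep, add_sub_cancel_right]
          rfl
      | add p q hpp hqq =>
          rw [mul_add, map_add, hpp, hqq]
          by_cases hkj : k = j
          · rw [if_pos hkj, if_pos hkj, if_pos hkj]
            exact (Submodule.Quotient.mk_add (NIdeal N)).symm
          · rw [if_neg hkj, if_neg hkj, if_neg hkj, add_zero]
      | smul c p hpp =>
          rw [mul_smul_comm, map_smul, hpp]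
          by_cases hkj : k = j
          · rw [if_pos hkj, if_pos hkj]
            exact (Submodule.Quotient.mk_smul (NIdeal N) c p).symm
          · rw [if_neg hkj, if_neg hkj, smul_zero]
    set x := ∑ j ∈ s.filter (fun j => j ∈ K), (γ (FreeGroup.of j) - 1) * D j (γ v) with hx
    have hxmem : x ∈ NIdeal N := by
      have hsplit : x + ∑ j ∈ s.filter (fun j => ¬ j ∈ K), (γ (FreeGroup.of j) - 1) * D j (γ v)
          = γ v - 1 := by
        rw [hx, Finset.sum_filter_add_sum_filter_not, ← hsum]
      have h2 : x = (γ v - 1)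
          - ∑ j ∈ s.filter (fun j => ¬ j ∈ K), (γ (FreeGroup.of j) - 1) * D j (γ v) :=
        eq_sub_of_add_eq hsplit
      rw [h2]
      refine Submodule.sub_mem _ (FoxAux.sub_one_mem hv) (Submodule.sum_mem _ ?_)
      intro j hj
      rw [Finset.mem_filter] at hj
      exact FoxAux.mul_left_mem _ (hvD' j hj.2)
    have h0 : Φ x = 0 := Φ_zero x hxmem
    rw [hx, map_sum] at h0
    rw [Finset.sum_congr rfl
        (fun j hj => Φ_gen j (Finset.mem_filter.mp hj).2 (D j (γ v))),
      Finset.sum_ite_eq, if_pos (Finset.mem_filter.mpr ⟨hks, hkK⟩)] at h0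
    exact (Submodule.Quotient.mk_eq_zero (NIdeal N)).mp h0
  refine FoxAux.mem_commutator_of N v hv ?_
  rw [hsum]
  exact Submodule.sum_mem _ fun j _ =>
    Submodule.subset_span ⟨FreeGroup.of j, D j (γ v), hDmem j, rfl⟩
end

section
/- Let F be a free group with basis {g_j | j ∈ J}, K ⊆ J, H the subgroup generated by {g_j | j ∈ K}, R a normal subgroup of F, and M the set of normal subgroups of F contained in R. Suppose that for every N ∈ M and every v ∈ N, the condition D_k(v) ≡ 0 mod ℤ[F]·(N−1) for all k ∈ J \ K implies v ∈ [N,N]. Then H ∩ R = 1. -/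
open scoped Classical

/-- A perfect free group is trivial. -/
lemma free_perfect_eq_one {G : Type} [Group G] [IsFreeGroup G]
    (h : commutator G = ⊤) (x : G) : x = 1 := by
  rcases isEmpty_or_nonempty (IsFreeGroup.Generators G) with he | hn
  · have hsub : IsFreeGroup.toFreeGroup (G := G) x = IsFreeGroup.toFreeGroup (G := G) 1 :=
      Subsingleton.elim _ _
    exact (IsFreeGroup.toFreeGroup (G := G)).injective hsub
  · exfalso
    obtain ⟨a⟩ := hn
    classical
    set f : IsFreeGroup.Generators G → Multiplicative ℤ :=
      fun g => if g = a then Multiplicative.ofAdd 1 else 1 with hf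
    set φ : G →* Multiplicative ℤ := IsFreeGroup.lift f with hφ
    have h1 : φ (IsFreeGroup.of a) = Multiplicative.ofAdd 1 := by
      rw [hφ, IsFreeGroup.lift_of, hf]; simp
    have h2 : φ (IsFreeGroup.of a) = 1 := by
      have hmem : IsFreeGroup.of a ∈ commutator G := h ▸ Subgroup.mem_top _
      exact Abelianization.commutator_subset_ker φ hmem
    rw [h1] at h2
    exact one_ne_zero (Multiplicative.ofAdd.injective (h2.trans rfl))

/-- Converse direction: if for every normal `N ⊆ R` and every `v ∈ N` the vanishing of
the Fox derivatives `D_k(v) mod ℤ[F]·(N−1)` (`k ∈ J \ K`) implies `v ∈ [N,N]`,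
then `H ∩ R = 1`. -/
theorem inter_trivial_of_commutator_mem {J : Type} (K : Set J)
    (H : Subgroup (FreeGroup J)) (hH : H = Subgroup.closure (FreeGroup.of '' K))
    (R : Subgroup (FreeGroup J)) (hR : R.Normal)
    (D : J → (MonoidAlgebra ℤ (FreeGroup J) →ₗ[ℤ] MonoidAlgebra ℤ (FreeGroup J)))
    (hD : ∀ j, IsFoxDerivative j (D j))
    (hyp : ∀ N : Subgroup (FreeGroup J), N.Normal → N ≤ R → ∀ v ∈ N,
      (∀ k, k ∉ K → D k (MonoidAlgebra.of ℤ (FreeGroup J) v) ∈ NIdeal N) →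
        v ∈ (⁅N, N⁆ : Subgroup (FreeGroup J))) :
    H ⊓ R = ⊥ := by
  rw [eq_bot_iff]
  intro v hv
  obtain ⟨hvH, hvR⟩ := hv
  -- augmentation of a group element is 1
  have haug : ∀ g : FreeGroup J, aug J (MonoidAlgebra.of ℤ (FreeGroup J) g) = 1 := by
    intro g
    show MonoidAlgebra.lift ℤ ℤ (FreeGroup J) 1 (MonoidAlgebra.of ℤ (FreeGroup J) g) = 1
    rw [MonoidAlgebra.lift_of]; rfl
  -- D k 1 = 0
  have hD1 : ∀ k, D k 1 = 0 := by
    intro k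
    have := (hD k).1 1 1
    rw [mul_one, mul_one, map_one (aug J), one_smul] at this
    exact (left_eq_add.mp this)
  -- Fox derivatives vanish on H for k ∉ K
  have hfox : ∀ w ∈ H, ∀ k, k ∉ K → D k (MonoidAlgebra.of ℤ (FreeGroup J) w) = 0 := by
    intro w hw
    rw [hH] at hw
    induction hw using Subgroup.closure_induction with
    | mem x hx =>
        obtain ⟨j, hjK, rfl⟩ := hx
        intro k hk
        rw [(hD k).2 j, if_neg (by rintro rfl; exact hk hjK)]
    | one =>
        intro k _
        rw [map_one (MonoidAlgebra.of ℤ (FreeGroup J))]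
        exact hD1 k
    | mul x y hx hy ihx ihy =>
        intro k hk
        rw [map_mul (MonoidAlgebra.of ℤ (FreeGroup J)), (hD k).1, ihx k hk, ihy k hk,
          zero_mul, smul_zero, add_zero]
    | inv x hx ihx =>
        intro k hk
        have h0 : D k (MonoidAlgebra.of ℤ (FreeGroup J) x *
            MonoidAlgebra.of ℤ (FreeGroup J) x⁻¹) = 0 := by
          rw [← map_mul (MonoidAlgebra.of ℤ (FreeGroup J)), mul_inv_cancel,
            map_one (MonoidAlgebra.of ℤ (FreeGroup J))]
          exact hD1 k
        rw [(hD k).1, ihx k hk, zero_mul, zero_add, haug, one_smul] at h0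
        exact h0
  -- the smallest normal subgroup of R containing v
  set S : Set (Subgroup (FreeGroup J)) := {N | N.Normal ∧ N ≤ R ∧ v ∈ N} with hS
  set Ns : Subgroup (FreeGroup J) := sInf S with hNs
  have hRS : R ∈ S := ⟨hR, le_rfl, hvR⟩
  have hNs_norm : Ns.Normal := by
    constructor
    intro n hn g
    rw [hNs, Subgroup.mem_sInf] at hn ⊢
    intro N hN
    exact hN.1.conj_mem n (hn N hN) g
  have hNsR : Ns ≤ R := sInf_le hRS
  have hvNs : v ∈ Ns := Subgroup.mem_sInf.mpr fun N hN => hN.2.2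
  have hvC : v ∈ ⁅Ns, Ns⁆ :=
    hyp Ns hNs_norm hNsR v hvNs (fun k hk => by rw [hfox v hvH k hk]; exact zero_mem _)
  haveI := hNs_norm
  have hCS : ⁅Ns, Ns⁆ ∈ S :=
    ⟨Subgroup.commutator_normal Ns Ns, (Subgroup.commutator_le_left Ns Ns).trans hNsR, hvC⟩
  have hEq : Ns = ⁅Ns, Ns⁆ :=
    le_antisymm (sInf_le hCS) (Subgroup.commutator_le_left Ns Ns)
  -- transfer to the subgroup Ns, which is a free group by Nielsen–Schreier
  have hmap : Subgroup.map Ns.subtype (commutator ↥Ns) = ⁅Ns, Ns⁆ := by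
    rw [commutator, Subgroup.map_commutator, ← MonoidHom.range_eq_map, Subgroup.range_subtype]
  have hperf : commutator ↥Ns = ⊤ := by
    rw [eq_top_iff]
    intro x _
    have hx : (x : FreeGroup J) ∈ ⁅Ns, Ns⁆ := hEq ▸ x.2
    rw [← hmap] at hx
    obtain ⟨y, hy, hyx⟩ := hx
    rwa [show y = x from Subtype.ext hyx] at hy
  have hone : (⟨v, hvNs⟩ : ↥Ns) = 1 := free_perfect_eq_one hperf _
  have : v = 1 := congrArg Subtype.val hone
  simpa [Subgroup.mem_bot] using this
end

section
/- Let F be a free group, N a normal subgroup of F, S a Schreier transversal for N in F with representative map u ↦ ū, and X the free basis of F. Then N is generated by the elements s·x·(\overline{sx})⁻¹ for s ∈ S, x ∈ X. -/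
/-- `S` is a Schreier transversal for `N` in the free group: a set of right coset
representatives (each right coset `Nf` contains exactly one element of `S`) that is
closed under taking initial segments of reduced words. -/
def IsSchreierTransversal {α : Type} [DecidableEq α] (N : Subgroup (FreeGroup α))
    (S : Set (FreeGroup α)) : Prop :=
  (∀ f : FreeGroup α, ∃! s, s ∈ S ∧ s * f⁻¹ ∈ N) ∧
  (∀ s ∈ S, ∀ t : FreeGroup α, t.toWord <+: s.toWord → t ∈ S)

/-- Reidemeister–Schreier: `N` is generated by the elements `s·x·(overline{sx})⁻¹`,
`s ∈ S`, `x` a basis element, where `overline{sx}` is the representative of `sx` in `S`. -/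
theorem schreier_generators {α : Type} [DecidableEq α] (N : Subgroup (FreeGroup α))
    (hN : N.Normal) (S : Set (FreeGroup α)) (hS : IsSchreierTransversal N S) :
    N = Subgroup.closure {w | ∃ s ∈ S, ∃ j : α, ∃ t ∈ S,
      t * (s * FreeGroup.of j)⁻¹ ∈ N ∧ w = s * FreeGroup.of j * t⁻¹} := by
  classical
  obtain ⟨huniq, hpref⟩ := hS
  set G : Set (FreeGroup α) := {w | ∃ s ∈ S, ∃ j : α, ∃ t ∈ S,
      t * (s * FreeGroup.of j)⁻¹ ∈ N ∧ w = s * FreeGroup.of j * t⁻¹} with hGdef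
  set H := Subgroup.closure G with hHdef
  have hone : (1 : FreeGroup α) ∈ S := by
    obtain ⟨s, ⟨hsS, _⟩, _⟩ := huniq 1
    exact hpref s hsS 1 (by simp)
  have h' : ∀ f : FreeGroup α, ∃ s, (s ∈ S ∧ s * f⁻¹ ∈ N) ∧
      ∀ y, y ∈ S ∧ y * f⁻¹ ∈ N → y = s := huniq
  choose r hr hru using h'
  -- generator lemma A
  have lemA : ∀ g : FreeGroup α, ∀ x : α,
      r g * FreeGroup.of x * (r (g * FreeGroup.of x))⁻¹ ∈ H := by
    intro g x
    apply Subgroup.subset_closure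
    refine ⟨r g, (hr g).1, x, r (g * FreeGroup.of x), (hr _).1, ?_, rfl⟩
    have h1 : r (g * FreeGroup.of x) * (g * FreeGroup.of x)⁻¹ ∈ N := (hr _).2
    have h2 : r g * g⁻¹ ∈ N := (hr g).2
    have heq : r (g * FreeGroup.of x) * (r g * FreeGroup.of x)⁻¹ =
        (r (g * FreeGroup.of x) * (g * FreeGroup.of x)⁻¹) * (r g * g⁻¹)⁻¹ := by
      group
    rw [heq]
    exact N.mul_mem h1 (N.inv_mem h2)
  -- generator lemma B
  have lemB : ∀ g : FreeGroup α, ∀ x : α,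
      r g * (FreeGroup.of x)⁻¹ * (r (g * (FreeGroup.of x)⁻¹))⁻¹ ∈ H := by
    intro g x
    have hmem : r (g * (FreeGroup.of x)⁻¹) * FreeGroup.of x * (r g)⁻¹ ∈ H := by
      apply Subgroup.subset_closure
      refine ⟨r (g * (FreeGroup.of x)⁻¹), (hr _).1, x, r g, (hr g).1, ?_, rfl⟩
      have h1 : r g * g⁻¹ ∈ N := (hr g).2
      have h2 : r (g * (FreeGroup.of x)⁻¹) * (g * (FreeGroup.of x)⁻¹)⁻¹ ∈ N := (hr _).2
      have heq : r g * (r (g * (FreeGroup.of x)⁻¹) * FreeGroup.of x)⁻¹ =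
          (r g * g⁻¹) * (r (g * (FreeGroup.of x)⁻¹) * (g * (FreeGroup.of x)⁻¹)⁻¹)⁻¹ := by
        group
      rw [heq]
      exact N.mul_mem h1 (N.inv_mem h2)
    have := H.inv_mem hmem
    have heq : (r (g * (FreeGroup.of x)⁻¹) * FreeGroup.of x * (r g)⁻¹)⁻¹ =
        (r g * (r (g * (FreeGroup.of x)⁻¹) * FreeGroup.of x)⁻¹) := by group
    rw [heq] at this
    have heq2 : r g * (FreeGroup.of x)⁻¹ * (r (g * (FreeGroup.of x)⁻¹))⁻¹ =
        r g * (r (g * (FreeGroup.of x)⁻¹) * FreeGroup.of x)⁻¹ := by group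
    rw [heq2]
    exact this
  -- main induction
  have main : ∀ g h : FreeGroup α, h * (r h)⁻¹ ∈ H → (h * g) * (r (h * g))⁻¹ ∈ H := by
    intro g
    induction g with
    | C1 => intro h hh; simpa using hh
    | of x =>
      intro h hh
      show h * FreeGroup.of x * (r (h * FreeGroup.of x))⁻¹ ∈ H
      have heq : (h * FreeGroup.of x) * (r (h * FreeGroup.of x))⁻¹ =
          (h * (r h)⁻¹) * (r h * FreeGroup.of x * (r (h * FreeGroup.of x))⁻¹) := by group
      rw [heq]
      exact H.mul_mem hh (lemA h x)
    | inv_of x _ =>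
      intro h hh
      show h * (FreeGroup.of x)⁻¹ * (r (h * (FreeGroup.of x)⁻¹))⁻¹ ∈ H
      have heq : (h * (FreeGroup.of x)⁻¹) * (r (h * (FreeGroup.of x)⁻¹))⁻¹ =
          (h * (r h)⁻¹) * (r h * (FreeGroup.of x)⁻¹ * (r (h * (FreeGroup.of x)⁻¹))⁻¹) := by
        group
      rw [heq]
      exact H.mul_mem hh (lemB h x)
    | mul a b ha hb =>
      intro h hh
      have := hb (h * a) (ha h hh)
      simpa [mul_assoc] using this
  have hr1 : r 1 = 1 := (hru 1 1 ⟨hone, by simpa using N.one_mem⟩).symm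
  apply le_antisymm
  · intro n hn
    have hrn : r n = 1 := (hru n 1 ⟨hone, by simpa using N.inv_mem hn⟩).symm
    have := main n 1 (by simp [hr1, H.one_mem])
    simpa [hrn] using this
  · rw [Subgroup.closure_le]
    rintro w ⟨s, hs, j, t, ht, htN, rfl⟩
    have := N.inv_mem htN
    simpa [mul_inv_rev, mul_assoc] using this
end

section
/- Let F be a free group, N a normal subgroup, S a Schreier transversal for N in F, and g_q a basis element of F. Then for every t ∈ S, the element D_q(t)·t⁻¹ ∈ ℤ[F] is a ℤ-linear combination (with coefficients ±1) of elements of the form (u·g_q^ε)⁻¹ where ε = ±1 and u·g_q^{max(ε,0)} ranges over initial segments of t lying in S; in particular D_q(t)·t⁻¹ is a sum of elements ±s⁻¹ with s ∈ S an initial segment of t. -/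
open scoped Classical

/-- A prefix of a reduced word is reduced. -/
lemma reduce_prefix_aux {α : Type} [DecidableEq α] {L₁ L₂ : List (α × Bool)}
    (h : FreeGroup.reduce (L₁ ++ L₂) = L₁ ++ L₂) : FreeGroup.reduce L₁ = L₁ := by
  rcases (Relation.ReflTransGen.cases_head (FreeGroup.reduce.red (L := L₁))) with h1 | ⟨c, hstep, _⟩
  · exact h1.symm
  · cases hstep with
    | @not P Q x b =>
      exact FreeGroup.reduce.not
        (show FreeGroup.reduce ((P ++ (x,b)::(x,!b)::Q) ++ L₂)
            = P ++ (x,b)::(x,!b)::(Q ++ L₂) from by rw [h]; simp)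

lemma aug_of_aux {α : Type} (g : FreeGroup α) :
    aug α (MonoidAlgebra.of ℤ (FreeGroup α) g) = 1 := by simp [aug]

lemma fox_one_aux {α : Type} {q : α}
    {D : MonoidAlgebra ℤ (FreeGroup α) →ₗ[ℤ] MonoidAlgebra ℤ (FreeGroup α)}
    (hD : IsFoxDerivative q D) : D 1 = 0 := by
  have h := hD.1 1 1
  have ha : aug α (1 : MonoidAlgebra ℤ (FreeGroup α)) = 1 := map_one _
  rw [ha, one_smul, mul_one, mul_one] at h
  exact left_eq_add.mp h

lemma fox_mul_aux {α : Type} {q : α}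
    {D : MonoidAlgebra ℤ (FreeGroup α) →ₗ[ℤ] MonoidAlgebra ℤ (FreeGroup α)}
    (hD : IsFoxDerivative q D) (x y : FreeGroup α) :
    D (MonoidAlgebra.of ℤ (FreeGroup α) (x * y)) =
      D (MonoidAlgebra.of ℤ (FreeGroup α) x) * MonoidAlgebra.of ℤ (FreeGroup α) y +
        D (MonoidAlgebra.of ℤ (FreeGroup α) y) := by
  rw [map_mul, hD.1, aug_of_aux, one_smul]

lemma fox_inv_aux {α : Type} {q : α}
    {D : MonoidAlgebra ℤ (FreeGroup α) →ₗ[ℤ] MonoidAlgebra ℤ (FreeGroup α)}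
    (hD : IsFoxDerivative q D) (g : FreeGroup α) :
    D (MonoidAlgebra.of ℤ (FreeGroup α) g⁻¹) =
      -(D (MonoidAlgebra.of ℤ (FreeGroup α) g) * MonoidAlgebra.of ℤ (FreeGroup α) g⁻¹) := by
  have h := fox_mul_aux hD g g⁻¹
  rw [mul_inv_cancel, map_one, fox_one_aux hD] at h
  exact eq_neg_of_add_eq_zero_right h.symm

lemma fox_step_aux {α : Type} {q : α}
    {D : MonoidAlgebra ℤ (FreeGroup α) →ₗ[ℤ] MonoidAlgebra ℤ (FreeGroup α)}
    (hD : IsFoxDerivative q D) (t' e : FreeGroup α) :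
    D (MonoidAlgebra.of ℤ (FreeGroup α) (t' * e)) * MonoidAlgebra.of ℤ (FreeGroup α) (t' * e)⁻¹ =
      D (MonoidAlgebra.of ℤ (FreeGroup α) t') * MonoidAlgebra.of ℤ (FreeGroup α) t'⁻¹ +
        D (MonoidAlgebra.of ℤ (FreeGroup α) e) * MonoidAlgebra.of ℤ (FreeGroup α) (t' * e)⁻¹ := by
  rw [fox_mul_aux hD, add_mul, mul_assoc, ← map_mul,
    show e * (t' * e)⁻¹ = t'⁻¹ by group]

lemma inv_of_eq_aux {α : Type} (a : α) :
    (FreeGroup.of a : FreeGroup α)⁻¹ = FreeGroup.mk [(a, false)] := by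
  rw [FreeGroup.of, FreeGroup.inv_mk]; rfl

/-- For `t ∈ S`, the element `D_q(t)·t⁻¹` is a sum of terms `±(u·g_q^ε)⁻¹` along the
occurrences of `g_q^{±1}` in `t`; in particular it is a sum of elements `±s⁻¹` with
`s ∈ S` an initial segment of `t`. -/
theorem fox_derivative_transversal_decomposition {α : Type} [DecidableEq α]
    (N : Subgroup (FreeGroup α)) (hN : N.Normal) (S : Set (FreeGroup α))
    (hS : IsSchreierTransversal N S) (q : α)
    (D : MonoidAlgebra ℤ (FreeGroup α) →ₗ[ℤ] MonoidAlgebra ℤ (FreeGroup α))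
    (hD : IsFoxDerivative q D) (t : FreeGroup α) (ht : t ∈ S) :
    ∃ (m : ℕ) (c : Fin m → ℤ) (s : Fin m → FreeGroup α),
      (∀ i, (s i ∈ S ∧ (s i).toWord <+: t.toWord) ∧
        ((c i = 1 ∧ ∃ u : FreeGroup α, s i = u * FreeGroup.of q) ∨
         (c i = -1 ∧ (s i * (FreeGroup.of q)⁻¹).toWord <+: t.toWord))) ∧
      D (MonoidAlgebra.of ℤ (FreeGroup α) t) * MonoidAlgebra.of ℤ (FreeGroup α) t⁻¹ =
        ∑ i, c i • MonoidAlgebra.of ℤ (FreeGroup α) (s i)⁻¹ := by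
  suffices H : ∀ (n : ℕ) (t : FreeGroup α), t.toWord.length ≤ n → t ∈ S →
      ∃ (m : ℕ) (c : Fin m → ℤ) (s : Fin m → FreeGroup α),
      (∀ i, (s i ∈ S ∧ (s i).toWord <+: t.toWord) ∧
        ((c i = 1 ∧ ∃ u : FreeGroup α, s i = u * FreeGroup.of q) ∨
         (c i = -1 ∧ (s i * (FreeGroup.of q)⁻¹).toWord <+: t.toWord))) ∧
      D (MonoidAlgebra.of ℤ (FreeGroup α) t) * MonoidAlgebra.of ℤ (FreeGroup α) t⁻¹ =
        ∑ i, c i • MonoidAlgebra.of ℤ (FreeGroup α) (s i)⁻¹ by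
    exact H t.toWord.length t le_rfl ht
  intro n
  induction n with
  | zero =>
    intro t hlen _
    have h0 : t.toWord = [] := List.eq_nil_of_length_eq_zero (Nat.le_zero.mp hlen)
    have ht1 : t = 1 := by
      rw [← FreeGroup.mk_toWord (x := t), h0]; rfl
    subst ht1
    refine ⟨0, Fin.elim0, Fin.elim0, fun i => i.elim0, ?_⟩
    simp [map_one, fox_one_aux hD]
  | succ n IH =>
    intro t hlen ht
    rcases List.eq_nil_or_concat t.toWord with h0 | ⟨L, ⟨a, b⟩, hL⟩
    · have ht1 : t = 1 := by
        rw [← FreeGroup.mk_toWord (x := t), h0]; rfl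
      subst ht1
      refine ⟨0, Fin.elim0, Fin.elim0, fun i => i.elim0, ?_⟩
      simp [map_one, fox_one_aux hD]
    · have hL' : t.toWord = L ++ [(a, b)] := by rw [hL, List.concat_eq_append]
      have hred : FreeGroup.reduce (L ++ [(a, b)]) = L ++ [(a, b)] := by
        rw [← hL']; exact FreeGroup.reduce_toWord t
      set t' := FreeGroup.mk L with ht'def
      have ht'w : t'.toWord = L := by
        rw [ht'def, FreeGroup.toWord_mk]; exact reduce_prefix_aux hred
      have hte : t = t' * FreeGroup.mk [(a, b)] := by
        rw [ht'def, FreeGroup.mul_mk, ← hL', FreeGroup.mk_toWord]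
      have hpre : t'.toWord <+: t.toWord := by
        rw [ht'w, hL']; exact ⟨[(a, b)], rfl⟩
      have ht' : t' ∈ S := hS.2 t ht t' hpre
      have hlen' : t'.toWord.length ≤ n := by
        rw [ht'w]
        have := congrArg List.length hL'
        simp at this
        omega
      obtain ⟨m, c, s, hcs, heq⟩ := IH t' hlen' ht'
      have hstep := fox_step_aux hD t' (FreeGroup.mk [(a, b)])
      rw [← hte] at hstep
      by_cases hq : a = q
      · subst hq
        cases b with
        | true =>
          have he : FreeGroup.mk [(a, true)] = FreeGroup.of a := by rw [FreeGroup.of]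
          have hDe : D (MonoidAlgebra.of ℤ (FreeGroup α) (FreeGroup.mk [(a, true)])) = 1 := by
            rw [he, hD.2, if_pos rfl]
          refine ⟨m + 1, Fin.snoc c 1, Fin.snoc s t, ?_, ?_⟩
          · intro i
            refine Fin.lastCases ?_ (fun j => ?_) i
            · simp only [Fin.snoc_last]
              refine ⟨⟨ht, List.prefix_refl _⟩, Or.inl ⟨?_, t', by rw [hte, he]⟩⟩
              trivial
            · simp only [Fin.snoc_castSucc]
              obtain ⟨⟨hjS, hjp⟩, hc⟩ := hcs j
              exact ⟨⟨hjS, hjp.trans hpre⟩,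
                hc.imp id (fun h => ⟨h.1, h.2.trans hpre⟩)⟩
          · rw [hstep, heq, hDe, one_mul, Fin.sum_univ_castSucc]
            simp only [Fin.snoc_castSucc, Fin.snoc_last, one_smul]
        | false =>
          have he : FreeGroup.mk [(a, false)] = (FreeGroup.of a)⁻¹ :=
            (inv_of_eq_aux a).symm
          have hDe : D (MonoidAlgebra.of ℤ (FreeGroup α) (FreeGroup.mk [(a, false)])) =
              -(MonoidAlgebra.of ℤ (FreeGroup α) (FreeGroup.of a)⁻¹) := by
            rw [he, fox_inv_aux hD, hD.2, if_pos rfl, one_mul]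
          have htt' : t' * (FreeGroup.of a)⁻¹ = t := by rw [hte, he]
          refine ⟨m + 1, Fin.snoc c (-1), Fin.snoc s t', ?_, ?_⟩
          · intro i
            refine Fin.lastCases ?_ (fun j => ?_) i
            · simp only [Fin.snoc_last]
              refine ⟨⟨ht', hpre⟩, Or.inr ⟨?_, ?_⟩⟩
              · trivial
              · rw [htt']
            · simp only [Fin.snoc_castSucc]
              obtain ⟨⟨hjS, hjp⟩, hc⟩ := hcs j
              exact ⟨⟨hjS, hjp.trans hpre⟩,
                hc.imp id (fun h => ⟨h.1, h.2.trans hpre⟩)⟩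
          · rw [hstep, heq, hDe, Fin.sum_univ_castSucc]
            simp only [Fin.snoc_castSucc, Fin.snoc_last]
            congr 1
            rw [neg_mul, ← map_mul,
              show (FreeGroup.of a)⁻¹ * t⁻¹ = t'⁻¹ by rw [← htt']; group]
            exact (neg_one_smul ℤ _).symm
      · have hDe : D (MonoidAlgebra.of ℤ (FreeGroup α) (FreeGroup.mk [(a, b)])) = 0 := by
          cases b with
          | true =>
            rw [show FreeGroup.mk [(a, true)] = FreeGroup.of a from by rw [FreeGroup.of],
              hD.2, if_neg (fun h => hq h.symm)]
          | false =>
            rw [(inv_of_eq_aux a).symm, fox_inv_aux hD, hD.2,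
              if_neg (fun h => hq h.symm), zero_mul, neg_zero]
        refine ⟨m, c, s, ?_, ?_⟩
        · intro i
          obtain ⟨⟨hjS, hjp⟩, hc⟩ := hcs i
          exact ⟨⟨hjS, hjp.trans hpre⟩, hc.imp id (fun h => ⟨h.1, h.2.trans hpre⟩)⟩
        · rw [hstep, heq, hDe, zero_mul, add_zero]
end

section
/- Let F be a free group with basis {g_j | j ∈ J}, let s, x, and N be such that N ⊴ F, S is a Schreier transversal for N, s ∈ S, x = g_q for some q ∈ J, and set w = s·x·(\overline{sx})⁻¹. Then D_q(w) ≡ D_q(s)·s⁻¹ + (\overline{sx})⁻¹ − D_q(\overline{sx})·(\overline{sx})⁻¹ modulo ℤ[F]·(N−1) + d·ℤ[F] for any integer d; and if instead x = g_p with p ≠ q, then D_q(w) ≡ D_q(s)·s⁻¹ − D_q(\overline{sx})·(\overline{sx})⁻¹ modulo the same ideal. -/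
open scoped Classical

/-- Congruences for the Fox derivative of a Schreier generator `w = s·x·(overline{sx})⁻¹`
modulo `ℤ[F]·(N−1) + d·ℤ[F]`: if `x = g_q` then
`D_q(w) ≡ D_q(s)s⁻¹ + (overline{sx})⁻¹ − D_q(overline{sx})(overline{sx})⁻¹`, and if
`x = g_p` with `p ≠ q` then `D_q(w) ≡ D_q(s)s⁻¹ − D_q(overline{sx})(overline{sx})⁻¹`. -/
theorem fox_derivative_schreier_generator {α : Type} [DecidableEq α]
    (N : Subgroup (FreeGroup α)) (hN : N.Normal) (S : Set (FreeGroup α))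
    (hS : IsSchreierTransversal N S)
    (bar : FreeGroup α → FreeGroup α) (hbar : ∀ f, bar f ∈ S ∧ bar f * f⁻¹ ∈ N)
    (q : α) (D : MonoidAlgebra ℤ (FreeGroup α) →ₗ[ℤ] MonoidAlgebra ℤ (FreeGroup α))
    (hD : IsFoxDerivative q D) (s : FreeGroup α) (hs : s ∈ S) (d : ℤ) :
    (D (MonoidAlgebra.of ℤ (FreeGroup α)
          (s * FreeGroup.of q * (bar (s * FreeGroup.of q))⁻¹)) -
        (D (MonoidAlgebra.of ℤ (FreeGroup α) s) * MonoidAlgebra.of ℤ (FreeGroup α) s⁻¹ +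
          MonoidAlgebra.of ℤ (FreeGroup α) (bar (s * FreeGroup.of q))⁻¹ -
          D (MonoidAlgebra.of ℤ (FreeGroup α) (bar (s * FreeGroup.of q))) *
            MonoidAlgebra.of ℤ (FreeGroup α) (bar (s * FreeGroup.of q))⁻¹) ∈
        NIdeal N ⊔ dIdeal d) ∧
    ∀ p : α, p ≠ q →
      (D (MonoidAlgebra.of ℤ (FreeGroup α)
            (s * FreeGroup.of p * (bar (s * FreeGroup.of p))⁻¹)) -
          (D (MonoidAlgebra.of ℤ (FreeGroup α) s) * MonoidAlgebra.of ℤ (FreeGroup α) s⁻¹ -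
            D (MonoidAlgebra.of ℤ (FreeGroup α) (bar (s * FreeGroup.of p))) *
              MonoidAlgebra.of ℤ (FreeGroup α) (bar (s * FreeGroup.of p))⁻¹) ∈
          NIdeal N ⊔ dIdeal d) := by

  obtain ⟨hmul, hgen⟩ := hD
  set e := MonoidAlgebra.of ℤ (FreeGroup α) with he
  have haug : ∀ f : FreeGroup α, aug α (e f) = 1 := fun f => by
    simp [aug, he]
  have hDone : D 1 = 0 := by
    have h := hmul 1 1
    simp only [mul_one, one_mul, map_one, one_smul] at h
    exact (left_eq_add.mp h)
  have hinv : ∀ f : FreeGroup α, D (e f⁻¹) = -(D (e f) * e f⁻¹) := by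
    intro f
    have h := hmul (e f) (e f⁻¹)
    rw [← map_mul, mul_inv_cancel, map_one, hDone, haug, one_smul] at h
    rw [eq_neg_iff_add_eq_zero, add_comm]
    exact h.symm
  have key : ∀ x : FreeGroup α,
      D (e (s * x * (bar (s * x))⁻¹)) -
        (D (e s) * e s⁻¹ + D (e x) * e (bar (s * x))⁻¹ -
          D (e (bar (s * x))) * e (bar (s * x))⁻¹) ∈ NIdeal N ⊔ dIdeal d := by
    intro x
    set t := bar (s * x) with ht
    have hw : s * x * t⁻¹ ∈ N := by
      have h := (hbar (s * x)).2
      have := N.inv_mem h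
      simpa [mul_inv_rev, mul_assoc] using this
    have h1 : D (e (s * x * t⁻¹)) =
        D (e s) * e x * e t⁻¹ + D (e x) * e t⁻¹ - D (e t) * e t⁻¹ := by
      rw [show e (s * x * t⁻¹) = e (s * x) * e t⁻¹ from map_mul e _ _, hmul,
        haug, one_smul, show e (s * x) = e s * e x from map_mul e _ _, hmul,
        haug, one_smul, hinv]
      noncomm_ring
    have h2 : e s⁻¹ * e (s * x * t⁻¹) = e x * e t⁻¹ := by
      rw [← map_mul, ← map_mul]
      congr 1
      group
    have heq : D (e (s * x * t⁻¹)) -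
        (D (e s) * e s⁻¹ + D (e x) * e t⁻¹ - D (e t) * e t⁻¹) =
        (D (e s) * e s⁻¹) * (e (s * x * t⁻¹) - 1) := by
      rw [h1, mul_sub, mul_one, mul_assoc (D (e s)) (e s⁻¹), h2]
      noncomm_ring
    rw [heq]
    exact Submodule.mem_sup_left (Submodule.subset_span ⟨D (e s) * e s⁻¹, s * x * t⁻¹, hw, rfl⟩)
  constructor
  · have h := key (FreeGroup.of q)
    rw [hgen q, if_pos rfl, one_mul] at h
    exact h
  · intro p hpq
    have h := key (FreeGroup.of p)
    rw [hgen p, if_neg (Ne.symm hpq), zero_mul, add_zero] at h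
    exact h
end
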